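/- arXiv:1701.06064 — 5 statements merged into one kernel-verified Lean document; each statement's English description precedes it below -/
import Mathlib

section
/- Let n, p, k be integers with 1 ≤ p ≤ n and 0 ≤ k ≤ p, let x ∈ Φ, and let c ∈ ℝ^n with c_i ≥ 0 for all i. Then for every α ∈ ℝ and every β ≥ 0, p·α + (p−k)·β − Σ_{i=1}^n [α + β·x_i − c_i]_+ ≤ min_{y ∈ Φ^k_x} Σ_{i=1}^n c_i·y_i (weak LP duality for the incremental recoverable selection problem). -/
open Finset

noncomputable section

/-- The set of feasible selections: 0-1 vectors with exactly `p` ones. -/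
def selPhi (n p : ℕ) : Set (Fin n → ℝ) :=
  {x | (∀ i, x i = 0 ∨ x i = 1) ∧ (∑ i, x i) = (p : ℝ)}

/-- The recovery set `Φ^k_x`. -/
def selPhiK (n p k : ℕ) (x : Fin n → ℝ) : Set (Fin n → ℝ) :=
  {y | (∀ i, y i = 0 ∨ y i = 1) ∧ (∑ i, y i) = (p : ℝ) ∧
    (p : ℝ) - (k : ℝ) ≤ ∑ i, x i * y i}

/-- The continuous budgeted uncertainty set `U^c`. -/
def Uc (n : ℕ) (cl d : Fin n → ℝ) (Γ : ℝ) : Set (Fin n → ℝ) :=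
  {c | ∃ δ : Fin n → ℝ, (∀ i, 0 ≤ δ i ∧ δ i ≤ d i) ∧ (∑ i, δ i) ≤ Γ ∧
    c = fun i => cl i + δ i}

/-- The optimal value `min_{y ∈ S} Σ c_i y_i` of the incremental problem. -/
def incVal (n : ℕ) (S : Set (Fin n → ℝ)) (c : Fin n → ℝ) : ℝ :=
  sInf {v | ∃ y ∈ S, v = ∑ i, c i * y i}

/-- Weak LP duality for the incremental recoverable selection problem. -/
theorem stmt0 (n p k : ℕ) (hp1 : 1 ≤ p) (hpn : p ≤ n) (hk : k ≤ p)
    (x : Fin n → ℝ) (hx : x ∈ selPhi n p)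
    (c : Fin n → ℝ) (hc : ∀ i, 0 ≤ c i)
    (α β : ℝ) (hβ : 0 ≤ β) :
    (p : ℝ) * α + ((p : ℝ) - (k : ℝ)) * β - ∑ i, max (α + β * x i - c i) 0 ≤
      incVal n (selPhiK n p k x) c := by
  obtain ⟨hx01, hxsum⟩ := hx
  apply le_csInf
  · refine ⟨∑ i, c i * x i, x, ⟨hx01, hxsum, ?_⟩, rfl⟩
    have h1 : ∑ i, x i * x i = ∑ i, x i :=
      Finset.sum_congr rfl (fun i _ => by rcases hx01 i with h | h <;> simp [h])
    rw [h1, hxsum]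
    have : (0:ℝ) ≤ (k:ℝ) := Nat.cast_nonneg k
    linarith
  · rintro v ⟨y, ⟨hy01, hysum, hxy⟩, rfl⟩
    have key : ∀ i, (α + β * x i) * y i - max (α + β * x i - c i) 0 ≤ c i * y i := by
      intro i
      rcases hy01 i with h | h
      · simp only [h, mul_zero, zero_sub]
        have := le_max_right (α + β * x i - c i) 0
        linarith
      · simp only [h, mul_one]
        have := le_max_left (α + β * x i - c i) 0
        linarith
    have hsum : ∑ i, ((α + β * x i) * y i - max (α + β * x i - c i) 0) ≤ ∑ i, c i * y i :=
      Finset.sum_le_sum (fun i _ => key i)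
    have hexp : ∑ i, ((α + β * x i) * y i - max (α + β * x i - c i) 0)
        = α * (∑ i, y i) + β * (∑ i, x i * y i) - ∑ i, max (α + β * x i - c i) 0 := by
      rw [Finset.sum_sub_distrib, Finset.mul_sum, Finset.mul_sum, ← Finset.sum_add_distrib]
      congr 1
      exact Finset.sum_congr rfl (fun i _ => by ring)
    have hβxy : β * ((p:ℝ) - (k:ℝ)) ≤ β * (∑ i, x i * y i) :=
      mul_le_mul_of_nonneg_left hxy hβ
    rw [hexp, hysum] at hsum
    linarith
end
end

section
/- Let n, p, k be integers with 1 ≤ k < p ≤ n and k ≤ n−p, let x ∈ Φ, and let c̲, d ∈ ℝ^n with c̲_i ≥ 0 and d_i ≥ 0 for all i, and Γ ≥ 0. Then there exists a worst-case scenario c* ∈ U^c, i.e. one attaining max_{c ∈ U^c} min_{y ∈ Φ^k_x} Σ_i c_i·y_i, such that either b₁(c*) ≤ b(c*), or b₁(c*) ∈ D, or b₂(c*) ∈ D, where D = {c̲_1,…,c̲_n} ∪ {c̲_1+d_1,…,c̲_n+d_n}. -/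
open Finset

noncomputable section

/-- The `j`-th smallest value (1-indexed) among the multiset `{c i : i ∈ s}`. -/
def kthSmallest (n : ℕ) (s : Finset (Fin n)) (c : Fin n → ℝ) (j : ℕ) : ℝ :=
  (Multiset.sort (s.1.map c) (· ≤ ·)).getD (j - 1) 0

def goodY (n p k : ℕ) (Xx : Finset (Fin n)) : Finset (Finset (Fin n)) :=
  Finset.univ.filter (fun Y => Y.card = p ∧ p - k ≤ (Y ∩ Xx).card)

section kth

variable {n : ℕ} (s : Finset (Fin n)) (c : Fin n → ℝ) (j : ℕ)

lemma kth_len : (Multiset.sort (s.1.map c) (· ≤ ·)).length = s.card := by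
  rw [Multiset.length_sort, Multiset.card_map]; rfl

lemma kth_attained (h1 : 1 ≤ j) (h2 : j ≤ s.card) : ∃ i ∈ s, c i = kthSmallest n s c j := by
  set l := Multiset.sort (s.1.map c) (· ≤ ·) with hl
  have hlen : l.length = s.card := kth_len s c
  have hj : j - 1 < l.length := by omega
  have hm : kthSmallest n s c j = l[j-1] := List.getD_eq_getElem l 0 hj
  have hmem : l[j-1] ∈ l := List.getElem_mem hj
  have hmem2 : l[j-1] ∈ s.1.map c := (Multiset.mem_sort _).1 hmem
  obtain ⟨i, hi, hci⟩ := Multiset.mem_map.1 hmem2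
  exact ⟨i, hi, by rw [hm, hci]⟩

lemma kth_countP (P : ℝ → Prop) [DecidablePred P] :
    (s.filter (fun i => P (c i))).card
      = (Multiset.sort (s.1.map c) (· ≤ ·)).countP (fun v => decide (P v)) := by
  have h1' : (s.filter (fun i => P (c i))).card
      = Multiset.card (Multiset.filter (fun i => P (c i)) s.1) := rfl
  rw [h1', ← Multiset.countP_map c s.1 (fun v => P v)]
  have h2' : ((Multiset.sort (s.1.map c) (· ≤ ·) : List ℝ) : Multiset ℝ) = s.1.map c :=
    Multiset.sort_eq _ _
  conv_lhs => rw [← h2']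
  exact Multiset.coe_countP _ _

lemma kth_card_le (h1 : 1 ≤ j) (h2 : j ≤ s.card) :
    j ≤ (s.filter (fun i => c i ≤ kthSmallest n s c j)).card := by
  classical
  set l := Multiset.sort (s.1.map c) (· ≤ ·) with hl
  have hlen : l.length = s.card := kth_len s c
  have hj : j - 1 < l.length := by omega
  set m := kthSmallest n s c j with hmdef
  have hm : m = l[j-1] := List.getD_eq_getElem l 0 hj
  have hsort : l.Pairwise (· ≤ ·) := Multiset.pairwise_sort _ _
  have hcount : (s.filter (fun i => c i ≤ m)).card = l.countP (fun v => decide (v ≤ m)) :=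
    kth_countP s c (fun v => v ≤ m)
  have hsplit := List.countP_append (p := fun v => decide (v ≤ m)) (l₁ := l.take j) (l₂ := l.drop j)
  rw [List.take_append_drop] at hsplit
  have hlen' : (l.take j).length = j := by rw [List.length_take]; omega
  have htake : (l.take j).countP (fun v => decide (v ≤ m)) = (l.take j).length := by
    rw [List.countP_eq_length]
    intro a ha
    rw [List.mem_iff_getElem] at ha
    obtain ⟨i, hi, hia⟩ := ha
    rw [List.getElem_take] at hia
    have hij : i < j := by rw [hlen'] at hi; exact hi
    have hle : l[i]'(by omega) ≤ l[j-1] := by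
      rcases Nat.lt_or_ge i (j-1) with h | h
      · have := List.Pairwise.rel_get_of_lt hsort (a := ⟨i, by omega⟩) (b := ⟨j-1, hj⟩)
          (by simpa using h)
        simpa using this
      · have : i = j - 1 := by omega
        subst this; exact le_refl _
    simp only [decide_eq_true_eq]
    rw [← hia, hm]; exact hle
  omega

lemma kth_card_lt (h1 : 1 ≤ j) (h2 : j ≤ s.card) :
    (s.filter (fun i => c i < kthSmallest n s c j)).card ≤ j - 1 := by
  classical
  set l := Multiset.sort (s.1.map c) (· ≤ ·) with hl
  have hlen : l.length = s.card := kth_len s c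
  have hj : j - 1 < l.length := by omega
  set m := kthSmallest n s c j with hmdef
  have hm : m = l[j-1] := List.getD_eq_getElem l 0 hj
  have hsort : l.Pairwise (· ≤ ·) := Multiset.pairwise_sort _ _
  have hcount : (s.filter (fun i => c i < m)).card = l.countP (fun v => decide (v < m)) :=
    kth_countP s c (fun v => v < m)
  have hsplit := List.countP_append (p := fun v => decide (v < m)) (l₁ := l.take (j-1)) (l₂ := l.drop (j-1))
  rw [List.take_append_drop] at hsplit
  have hdrop : (l.drop (j-1)).countP (fun v => decide (v < m)) = 0 := by
    rw [List.countP_eq_zero]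
    intro a ha
    rw [List.mem_iff_getElem] at ha
    obtain ⟨i, hi, hia⟩ := ha
    have hi' : j - 1 + i < l.length := by rw [List.length_drop] at hi; omega
    rw [List.getElem_drop] at hia
    have hle : l[j-1] ≤ l[j-1+i]'hi' := by
      rcases Nat.eq_zero_or_pos i with h | h
      · subst h; simp
      · have := List.Pairwise.rel_get_of_lt hsort (a := ⟨j-1, hj⟩)
          (b := ⟨j-1+i, hi'⟩) (by simp; omega)
        simpa using this
    simp only [decide_eq_true_eq, not_lt]
    rw [← hia, hm]; exact hle
  have htake : (l.take (j-1)).countP (fun v => decide (v < m)) ≤ j - 1 := by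
    calc (l.take (j-1)).countP _ ≤ (l.take (j-1)).length := List.countP_le_length
    _ ≤ j - 1 := by rw [List.length_take]; omega
  omega

end kth

section repr

variable {n p k : ℕ} {x : Fin n → ℝ}

lemma sum_eq_card {y : Fin n → ℝ} (hy : ∀ i, y i = 0 ∨ y i = 1) :
    (∑ i, y i) = ((Finset.univ.filter (fun i => y i = 1)).card : ℝ) := by
  classical
  rw [← Finset.sum_boole]
  apply Finset.sum_congr rfl
  intro i _
  rcases hy i with h | h <;> simp [h]

lemma sum_mul_eq_card {y : Fin n → ℝ} (hxx : ∀ i, x i = 0 ∨ x i = 1)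
    (hy : ∀ i, y i = 0 ∨ y i = 1) :
    (∑ i, x i * y i)
      = (((Finset.univ.filter (fun i => y i = 1)) ∩ (Finset.univ.filter (fun i => x i = 1))).card : ℝ) := by
  classical
  rw [← Finset.filter_and, ← Finset.sum_boole]
  apply Finset.sum_congr rfl
  intro i _
  rcases hxx i with h | h <;> rcases hy i with h' | h' <;> simp [h, h']

/-- the support finset of an indicator vector -/
lemma sum_indicator_eq {Y : Finset (Fin n)} (c : Fin n → ℝ) :
    (∑ i, c i * (if i ∈ Y then (1:ℝ) else 0)) = ∑ i ∈ Y, c i := by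
  classical
  rw [Finset.sum_congr rfl (fun i _ => by rw [mul_ite, mul_one, mul_zero]),
    Finset.sum_ite_mem]
  simp

lemma xx_card (hx : x ∈ selPhi n p) :
    (Finset.univ.filter (fun i => x i = 1)).card = p := by
  have := hx.2
  rw [sum_eq_card hx.1] at this
  exact_mod_cast this

lemma goodY_nonempty (hx : x ∈ selPhi n p) :
    (goodY n p k (Finset.univ.filter (fun i => x i = 1))).Nonempty := by
  classical
  refine ⟨Finset.univ.filter (fun i => x i = 1), ?_⟩
  simp only [goodY, Finset.mem_filter, Finset.mem_univ, true_and, Finset.inter_self]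
  exact ⟨xx_card hx, by rw [xx_card hx]; omega⟩

/-- The value set of the incremental problem equals the finite image. -/
lemma incVal_eq (hx : x ∈ selPhi n p) (hkp : k ≤ p) (c : Fin n → ℝ) :
    incVal n (selPhiK n p k x) c
      = (goodY n p k (Finset.univ.filter (fun i => x i = 1))).inf' (goodY_nonempty hx)
          (fun Y => ∑ i ∈ Y, c i) := by
  classical
  set Xx := Finset.univ.filter (fun i => x i = 1) with hXx
  set T := goodY n p k Xx with hT
  have hset : {v | ∃ y ∈ selPhiK n p k x, v = ∑ i, c i * y i}
      = ↑(T.image (fun Y => ∑ i ∈ Y, c i)) := by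
    ext v
    simp only [Set.mem_setOf_eq, Finset.coe_image, Set.mem_image, Finset.mem_coe]
    constructor
    · rintro ⟨y, ⟨hy01, hysum, hyrec⟩, rfl⟩
      refine ⟨Finset.univ.filter (fun i => y i = 1), ?_, ?_⟩
      · rw [hT, goodY]
        simp only [Finset.mem_filter, Finset.mem_univ, true_and]
        constructor
        · have := hysum; rw [sum_eq_card hy01] at this; exact_mod_cast this
        · have := hyrec
          rw [sum_mul_eq_card hx.1 hy01] at this
          have h2 : ((p - k : ℕ) : ℝ) ≤ (((Finset.univ.filter (fun i => y i = 1)) ∩ Xx).card : ℝ) := by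
            rw [Nat.cast_sub hkp]; exact this
          exact_mod_cast h2
      · -- value
        rw [Finset.sum_filter]
        apply Finset.sum_congr rfl
        intro i _
        rcases hy01 i with h | h <;> simp [h]
    · rintro ⟨Y, hY, rfl⟩
      rw [hT, goodY] at hY
      simp only [Finset.mem_filter, Finset.mem_univ, true_and] at hY
      refine ⟨fun i => if i ∈ Y then (1:ℝ) else 0, ⟨?_, ?_, ?_⟩, ?_⟩
      · intro i; by_cases h : i ∈ Y <;> simp [h]
      · have h01 : ∀ i, (if i ∈ Y then (1:ℝ) else 0) = 0 ∨ (if i ∈ Y then (1:ℝ) else 0) = 1 := by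
          intro i; by_cases h : i ∈ Y <;> simp [h]
        rw [sum_eq_card h01]
        have : Finset.univ.filter (fun i => (if i ∈ Y then (1:ℝ) else 0) = 1) = Y := by
          ext i; by_cases h : i ∈ Y <;> simp [h]
        rw [this, hY.1]
      · have h01 : ∀ i, (if i ∈ Y then (1:ℝ) else 0) = 0 ∨ (if i ∈ Y then (1:ℝ) else 0) = 1 := by
          intro i; by_cases h : i ∈ Y <;> simp [h]
        rw [sum_mul_eq_card hx.1 h01]
        have hYf : Finset.univ.filter (fun i => (if i ∈ Y then (1:ℝ) else 0) = 1) = Y := by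
          ext i; by_cases h : i ∈ Y <;> simp [h]
        rw [hYf]
        have := hY.2
        have h2 : ((p - k : ℕ) : ℝ) ≤ ((Y ∩ Xx).card : ℝ) := by exact_mod_cast this
        rw [Nat.cast_sub hkp] at h2
        exact h2
      · exact (sum_indicator_eq c).symm
    
  rw [incVal, hset]
  -- sInf of coe of finite nonempty finset = inf'
  have hne : (T.image (fun Y => ∑ i ∈ Y, c i)).Nonempty := (goodY_nonempty hx).image _
  rw [Finset.Nonempty.csInf_eq_min' hne]
  apply le_antisymm
  · obtain ⟨Y, hY, hval⟩ := Finset.exists_mem_eq_inf' (goodY_nonempty hx) (fun Y => ∑ i ∈ Y, c i)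
    rw [hval]
    exact Finset.min'_le _ _ (Finset.mem_image_of_mem _ hY)
  · apply Finset.le_min'
    intro v hv
    obtain ⟨Y, hY, rfl⟩ := Finset.mem_image.1 hv
    exact Finset.inf'_le _ hY
end repr

lemma cont_inf' {ι : Type*} (s : Finset ι) (hs : s.Nonempty) (g : ι → (Fin n → ℝ) → ℝ)
    (hg : ∀ i, Continuous (g i)) : Continuous fun c => s.inf' hs (fun i => g i c) := by
  induction hs using Finset.Nonempty.cons_induction with
  | singleton a => simpa using hg a
  | cons a s h hs ih =>
      have heq : (fun c => (Finset.cons a s h).inf' (Finset.cons_nonempty h) (fun i => g i c))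
          = fun c => min (g a c) (s.inf' hs (fun i => g i c)) := by
        funext c; rw [Finset.inf'_cons hs]
      rw [heq]
      exact (hg a).min ih

lemma Uc_compact (n : ℕ) (cl d : Fin n → ℝ) (Γ : ℝ) : IsCompact (Uc n cl d Γ) := by
  have himg : Uc n cl d Γ
      = (fun δ : Fin n → ℝ => fun i => cl i + δ i) ''
        (Set.Icc (0 : Fin n → ℝ) d ∩ {δ | (∑ i, δ i) ≤ Γ}) := by
    ext c
    simp only [Uc, Set.mem_setOf_eq, Set.mem_image, Set.mem_inter_iff, Set.mem_Icc]
    constructor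
    · rintro ⟨δ, h1, h2, rfl⟩
      exact ⟨δ, ⟨⟨fun i => (h1 i).1, fun i => (h1 i).2⟩, h2⟩, rfl⟩
    · rintro ⟨δ, ⟨⟨h0, hd⟩, h2⟩, rfl⟩
      exact ⟨δ, fun i => ⟨h0 i, hd i⟩, h2, rfl⟩
  rw [himg]
  apply IsCompact.image
  · apply IsCompact.of_isClosed_subset (isCompact_Icc (a := (0 : Fin n → ℝ)) (b := d))
    · apply IsClosed.inter isClosed_Icc
      exact isClosed_le (by continuity) continuous_const
    · exact Set.inter_subset_left
  · exact continuous_pi (fun i => continuous_const.add (continuous_apply i))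

lemma Uc_nonempty (n : ℕ) (cl d : Fin n → ℝ) (Γ : ℝ) (hd : ∀ i, 0 ≤ d i) (hΓ : 0 ≤ Γ) :
    (Uc n cl d Γ).Nonempty := by
  refine ⟨fun i => cl i + 0, fun i => (0:ℝ), fun i => ⟨le_refl _, hd i⟩, by simpa using hΓ, rfl⟩


section structure_sec


variable {n p k : ℕ} {Xx : Finset (Fin n)} {c : Fin n → ℝ}

lemma exists_not_pred {T : Finset (Fin n)} {Q : Fin n → Prop} [DecidablePred Q]
    (h : (T.filter Q).card < T.card) : ∃ i ∈ T, ¬ Q i := by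
  by_contra hcon
  push_neg at hcon
  rw [Finset.filter_true_of_mem hcon] at h
  omega

lemma exists_not_mem {W Y : Finset (Fin n)} (h : (W ∩ Y).card < W.card) :
    ∃ i ∈ W, i ∉ Y := by
  by_contra hcon
  push_neg at hcon
  rw [Finset.inter_eq_left.2 hcon] at h
  omega

lemma swap_false (hp : 1 ≤ p) {Y : Finset (Fin n)} (hYc : Y.card = p)
    (hmin : ∀ Z ∈ goodY n p k Xx, ∑ i ∈ Y, c i ≤ ∑ i ∈ Z, c i)
    {i0 i1 : Fin n} (h1 : i1 ∈ Y) (h0 : i0 ∉ Y) (hlt : c i0 < c i1)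
    (hint : p - k ≤ ((insert i0 (Y.erase i1)) ∩ Xx).card) : False := by
  classical
  set Y' := insert i0 (Y.erase i1) with hY'
  have h0' : i0 ∉ Y.erase i1 := fun hmem => h0 (Finset.mem_of_mem_erase hmem)
  have hcard' : Y'.card = p := by
    rw [hY', Finset.card_insert_of_notMem h0', Finset.card_erase_of_mem h1, hYc]
    omega
  have hY'good : Y' ∈ goodY n p k Xx := by
    rw [goodY, Finset.mem_filter]
    exact ⟨Finset.mem_univ _, hcard', hint⟩
  have hsum : ∑ i ∈ Y', c i = c i0 + (∑ i ∈ Y, c i - c i1) := by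
    rw [hY', Finset.sum_insert h0', Finset.sum_erase_eq_sub h1]
  have := hmin Y' hY'good
  rw [hsum] at this
  linarith

lemma inter_swap_in {Y : Finset (Fin n)} {i0 i1 : Fin n} (h0 : i0 ∉ Y)
    (hi0 : i0 ∈ Xx) (hi1 : i1 ∈ Y ∩ Xx) :
    ((insert i0 (Y.erase i1)) ∩ Xx).card = (Y ∩ Xx).card := by
  classical
  rw [Finset.insert_inter_of_mem hi0, Finset.erase_inter]
  have h0' : i0 ∉ (Y ∩ Xx).erase i1 := fun h =>
    h0 (Finset.mem_inter.1 (Finset.mem_of_mem_erase h)).1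
  rw [Finset.card_insert_of_notMem h0', Finset.card_erase_of_mem hi1]
  have : 1 ≤ (Y ∩ Xx).card := Finset.card_pos.2 ⟨i1, hi1⟩
  omega

lemma inter_swap_out {Y : Finset (Fin n)} {i0 i1 : Fin n}
    (hi0 : i0 ∉ Xx) (hi1 : i1 ∉ Xx) :
    ((insert i0 (Y.erase i1)) ∩ Xx) = Y ∩ Xx := by
  classical
  rw [Finset.insert_inter_of_notMem hi0, Finset.erase_inter,
    Finset.erase_eq_of_notMem (fun h => hi1 (Finset.mem_inter.1 h).2)]

lemma inter_swap_cross {Y : Finset (Fin n)} {i0 i1 : Fin n}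
    (hi0 : i0 ∉ Xx) (hi1 : i1 ∈ Y ∩ Xx) :
    ((insert i0 (Y.erase i1)) ∩ Xx).card = (Y ∩ Xx).card - 1 := by
  classical
  rw [Finset.insert_inter_of_notMem hi0, Finset.erase_inter,
    Finset.card_erase_of_mem hi1]

lemma minimizer_structure
    (hk1 : 1 ≤ k) (hkp : k < p) (hpn : p ≤ n) (hknp : k ≤ n - p)
    (hcard : Xx.card = p)
    (hb : kthSmallest n Finset.univ c p < kthSmallest n Xx c (p - k))
    {Y : Finset (Fin n)} (hY : Y ∈ goodY n p k Xx)
    (hmin : ∀ Z ∈ goodY n p k Xx, ∑ i ∈ Y, c i ≤ ∑ i ∈ Z, c i) :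
    (Xx.filter (fun i => c i < kthSmallest n Xx c (p-k))).card
      + (Y ∩ Xx.filter (fun i => c i = kthSmallest n Xx c (p-k))).card = p - k
    ∧ (Xxᶜ.filter (fun i => c i < kthSmallest n Xxᶜ c k)).card
      + (Y ∩ Xxᶜ.filter (fun i => c i = kthSmallest n Xxᶜ c k)).card = k
    ∧ (Y ∩ Xx).card = p - k := by
  classical
  set b1 := kthSmallest n Xx c (p-k) with hb1
  set b2 := kthSmallest n Xxᶜ c k with hb2
  set b := kthSmallest n Finset.univ c p with hbb
  have hp : 1 ≤ p := by omega
  have hcompl : Xxᶜ.card = n - p := by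
    rw [Finset.card_compl, hcard, Fintype.card_fin]
  rw [goodY, Finset.mem_filter] at hY
  obtain ⟨-, hYc, hYXx⟩ := hY
  -- counting facts
  have cA_lt : (Xx.filter (fun i => c i < b1)).card ≤ p - k - 1 := by
    have h := kth_card_lt Xx c (p-k) (by omega) (by omega)
    rw [← hb1] at h
    omega
  have cA_le : p - k ≤ (Xx.filter (fun i => c i ≤ b1)).card :=
    kth_card_le Xx c (p-k) (by omega) (by omega)
  have cB_lt : (Xxᶜ.filter (fun i => c i < b2)).card ≤ k - 1 := by
    have h := kth_card_lt Xxᶜ c k (by omega) (by omega)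
    rw [← hb2] at h
    omega
  have cB_le : k ≤ (Xxᶜ.filter (fun i => c i ≤ b2)).card :=
    kth_card_le Xxᶜ c k (by omega) (by omega)
  have cO : k + 1 ≤ (Xxᶜ.filter (fun i => c i < b1)).card := by
    have hu : p ≤ (Finset.univ.filter (fun i => c i ≤ b)).card :=
      kth_card_le Finset.univ c p (by omega) (by simp [hpn])
    have hsplitu : (Finset.univ.filter (fun i => c i ≤ b)).card
        = (Xx.filter (fun i => c i ≤ b)).card + (Xxᶜ.filter (fun i => c i ≤ b)).card := by
      rw [← Finset.union_compl Xx, Finset.filter_union]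
      exact Finset.card_union_of_disjoint
        (Finset.disjoint_filter_filter disjoint_compl_right)
    have hsub1 : (Xx.filter (fun i => c i ≤ b)) ⊆ (Xx.filter (fun i => c i < b1)) := by
      apply Finset.monotone_filter_right
      intro i _ hi
      exact lt_of_le_of_lt hi hb
    have hsub2 : (Xxᶜ.filter (fun i => c i ≤ b)) ⊆ (Xxᶜ.filter (fun i => c i < b1)) := by
      apply Finset.monotone_filter_right
      intro i _ hi
      exact lt_of_le_of_lt hi hb
    have h1 := Finset.card_le_card hsub1
    have h2 := Finset.card_le_card hsub2
    omega
  -- the Y ∩ Xxᶜ card relation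
  have hYsplit : (Y ∩ Xx).card + (Y ∩ Xxᶜ).card = p := by
    have h := Finset.card_filter_add_card_filter_not
      (s := Y) (fun i => i ∈ Xx)
    have h1 : Y.filter (fun i => i ∈ Xx) = Y ∩ Xx := Finset.filter_mem_eq_inter
    have h2 : Y.filter (fun i => ¬ i ∈ Xx) = Y ∩ Xxᶜ := by
      ext j
      simp [Finset.mem_filter, Finset.mem_compl]
    rw [h1, h2] at h
    omega
  -- (b): all of Y ∩ Xx has c ≤ b1
  have fact_b : ∀ i1 ∈ Y ∩ Xx, c i1 ≤ b1 := by
    intro i1 hi1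
    by_contra hgt
    push_neg at hgt
    by_cases hAY : ∀ i ∈ Xx.filter (fun i => c i ≤ b1), i ∈ Y
    · -- A_≤ ⊆ Y hence Y ∩ Xx is big
      have hstrong : p - k + 1 ≤ (Y ∩ Xx).card := by
        have hsub : insert i1 (Xx.filter (fun i => c i ≤ b1)) ⊆ Y ∩ Xx := by
          intro j hj
          rcases Finset.mem_insert.1 hj with rfl | hj
          · exact hi1
          · rw [Finset.mem_filter] at hj
            exact Finset.mem_inter.2 ⟨hAY _ (Finset.mem_filter.2 hj), hj.1⟩
        have hni : i1 ∉ Xx.filter (fun i => c i ≤ b1) := by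
          rw [Finset.mem_filter]
          rintro ⟨-, hle⟩
          exact absurd hle (not_le.2 hgt)
        have := Finset.card_le_card hsub
        rw [Finset.card_insert_of_notMem hni] at this
        omega
      -- find i0 outside, not in Y, with c i0 < b1
      have hYout : ((Xxᶜ.filter (fun i => c i < b1)) ∩ Y).card < (Xxᶜ.filter (fun i => c i < b1)).card := by
        have hsub : (Xxᶜ.filter (fun i => c i < b1)) ∩ Y ⊆ Y ∩ Xxᶜ := by
          intro j hj
          rw [Finset.mem_inter, Finset.mem_filter] at hj
          exact Finset.mem_inter.2 ⟨hj.2, hj.1.1⟩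
        have := Finset.card_le_card hsub
        omega
      obtain ⟨i0, hi0W, hi0Y⟩ := exists_not_mem hYout
      rw [Finset.mem_filter] at hi0W
      apply swap_false hp hYc hmin (Finset.mem_inter.1 hi1).1 hi0Y
        (lt_trans hi0W.2 hgt)
      rw [inter_swap_cross (Finset.mem_compl.1 hi0W.1) hi1]
      omega
    · push_neg at hAY
      obtain ⟨i0, hi0A, hi0Y⟩ := hAY
      rw [Finset.mem_filter] at hi0A
      apply swap_false hp hYc hmin (Finset.mem_inter.1 hi1).1 hi0Y
        (lt_of_le_of_lt hi0A.2 hgt)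
      rw [inter_swap_in hi0Y hi0A.1 hi1]
      omega
  -- (c): Y ∩ Xx has exactly p - k elements
  have fact_c : (Y ∩ Xx).card = p - k := by
    by_contra hne
    have hstrong : p - k + 1 ≤ (Y ∩ Xx).card := by omega
    have hYout : ((Xxᶜ.filter (fun i => c i < b1)) ∩ Y).card
        < (Xxᶜ.filter (fun i => c i < b1)).card := by
      have hsub : (Xxᶜ.filter (fun i => c i < b1)) ∩ Y ⊆ Y ∩ Xxᶜ := by
        intro j hj
        rw [Finset.mem_inter, Finset.mem_filter] at hj
        exact Finset.mem_inter.2 ⟨hj.2, hj.1.1⟩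
      have := Finset.card_le_card hsub
      omega
    obtain ⟨i0, hi0W, hi0Y⟩ := exists_not_mem hYout
    rw [Finset.mem_filter] at hi0W
    -- find i1 ∈ Y ∩ Xx with c i1 > c i0
    have hflt : ((Y ∩ Xx).filter (fun i => c i ≤ c i0)).card < (Y ∩ Xx).card := by
      have hsub : (Y ∩ Xx).filter (fun i => c i ≤ c i0) ⊆ Xx.filter (fun i => c i < b1) := by
        intro j hj
        rw [Finset.mem_filter, Finset.mem_inter] at hj
        exact Finset.mem_filter.2 ⟨hj.1.2, lt_of_le_of_lt hj.2 hi0W.2⟩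
      have := Finset.card_le_card hsub
      omega
    obtain ⟨i1, hi1, hgt⟩ := exists_not_pred hflt
    push_neg at hgt
    apply swap_false hp hYc hmin (Finset.mem_inter.1 hi1).1 hi0Y hgt
    rw [inter_swap_cross (Finset.mem_compl.1 hi0W.1) hi1]
    omega
  -- (a): A_< ⊆ Y
  have fact_a : Xx.filter (fun i => c i < b1) ⊆ Y := by
    intro i0 hi0
    by_contra hi0Y
    rw [Finset.mem_filter] at hi0
    have hflt : ((Y ∩ Xx).filter (fun i => c i ≤ c i0)).card < (Y ∩ Xx).card := by
      have hsub : (Y ∩ Xx).filter (fun i => c i ≤ c i0)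
          ⊆ (Xx.filter (fun i => c i < b1)).erase i0 := by
        intro j hj
        rw [Finset.mem_filter, Finset.mem_inter] at hj
        refine Finset.mem_erase.2 ⟨?_, Finset.mem_filter.2 ⟨hj.1.2, lt_of_le_of_lt hj.2 hi0.2⟩⟩
        rintro rfl
        exact hi0Y hj.1.1
      have h1 := Finset.card_le_card hsub
      have h2 : ((Xx.filter (fun i => c i < b1)).erase i0).card
          = (Xx.filter (fun i => c i < b1)).card - 1 :=
        Finset.card_erase_of_mem (Finset.mem_filter.2 hi0)
      omega
    obtain ⟨i1, hi1, hgt⟩ := exists_not_pred hflt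
    push_neg at hgt
    apply swap_false hp hYc hmin (Finset.mem_inter.1 hi1).1 hi0Y hgt
    rw [inter_swap_in hi0Y hi0.1 hi1]
    omega
  -- (e): all of Y ∩ Xxᶜ has c ≤ b2
  have hYout_card : (Y ∩ Xxᶜ).card = k := by omega
  have fact_e : ∀ j1 ∈ Y ∩ Xxᶜ, c j1 ≤ b2 := by
    intro j1 hj1
    by_contra hgt
    push_neg at hgt
    have hnotin : ((Xxᶜ.filter (fun i => c i ≤ b2)) ∩ Y).card
        < (Xxᶜ.filter (fun i => c i ≤ b2)).card := by
      have hsub : (Xxᶜ.filter (fun i => c i ≤ b2)) ∩ Y ⊆ (Y ∩ Xxᶜ).erase j1 := by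
        intro j hj
        rw [Finset.mem_inter, Finset.mem_filter] at hj
        refine Finset.mem_erase.2 ⟨?_, Finset.mem_inter.2 ⟨hj.2, hj.1.1⟩⟩
        rintro rfl
        exact absurd hj.1.2 (not_le.2 hgt)
      have h1 := Finset.card_le_card hsub
      have h2 : ((Y ∩ Xxᶜ).erase j1).card = (Y ∩ Xxᶜ).card - 1 :=
        Finset.card_erase_of_mem hj1
      omega
    obtain ⟨j0, hj0W, hj0Y⟩ := exists_not_mem hnotin
    rw [Finset.mem_filter] at hj0W
    apply swap_false hp hYc hmin (Finset.mem_inter.1 hj1).1 hj0Y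
      (lt_of_le_of_lt hj0W.2 hgt)
    rw [Finset.mem_compl] at hj0W
    rw [inter_swap_out hj0W.1 (Finset.mem_compl.1 (Finset.mem_inter.1 hj1).2)]
    omega
  -- (d): B_< ⊆ Y
  have fact_d : Xxᶜ.filter (fun i => c i < b2) ⊆ Y := by
    intro j0 hj0
    by_contra hj0Y
    rw [Finset.mem_filter] at hj0
    have hflt : ((Y ∩ Xxᶜ).filter (fun i => c i ≤ c j0)).card < (Y ∩ Xxᶜ).card := by
      have hsub : (Y ∩ Xxᶜ).filter (fun i => c i ≤ c j0)
          ⊆ (Xxᶜ.filter (fun i => c i < b2)).erase j0 := by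
        intro j hj
        rw [Finset.mem_filter, Finset.mem_inter] at hj
        refine Finset.mem_erase.2 ⟨?_, Finset.mem_filter.2 ⟨hj.1.2, lt_of_le_of_lt hj.2 hj0.2⟩⟩
        rintro rfl
        exact hj0Y hj.1.1
      have h1 := Finset.card_le_card hsub
      have h2 : ((Xxᶜ.filter (fun i => c i < b2)).erase j0).card
          = (Xxᶜ.filter (fun i => c i < b2)).card - 1 :=
        Finset.card_erase_of_mem (Finset.mem_filter.2 hj0)
      omega
    obtain ⟨j1, hj1, hgt⟩ := exists_not_pred hflt
    push_neg at hgt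
    apply swap_false hp hYc hmin (Finset.mem_inter.1 hj1).1 hj0Y hgt
    rw [inter_swap_out (Finset.mem_compl.1 hj0.1) (Finset.mem_compl.1 (Finset.mem_inter.1 hj1).2)]
    omega
  -- count conclusions
  refine ⟨?_, ?_, fact_c⟩
  · -- partition Y ∩ Xx by < b1 / = b1
    have hsplit : ((Y ∩ Xx).filter (fun i => c i < b1)).card
        + ((Y ∩ Xx).filter (fun i => ¬ c i < b1)).card = (Y ∩ Xx).card :=
      Finset.card_filter_add_card_filter_not _
    have he1 : (Y ∩ Xx).filter (fun i => c i < b1) = Xx.filter (fun i => c i < b1) := by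
      apply Finset.Subset.antisymm
      · intro j hj
        rw [Finset.mem_filter, Finset.mem_inter] at hj
        exact Finset.mem_filter.2 ⟨hj.1.2, hj.2⟩
      · intro j hj
        have := fact_a hj
        rw [Finset.mem_filter] at hj
        exact Finset.mem_filter.2 ⟨Finset.mem_inter.2 ⟨this, hj.1⟩, hj.2⟩
    have he2 : (Y ∩ Xx).filter (fun i => ¬ c i < b1)
        = Y ∩ Xx.filter (fun i => c i = b1) := by
      ext j
      rw [Finset.mem_filter, Finset.mem_inter, Finset.mem_inter, Finset.mem_filter]
      constructor
      · rintro ⟨⟨hjY, hjX⟩, hnlt⟩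
        exact ⟨hjY, hjX, le_antisymm (fact_b j (Finset.mem_inter.2 ⟨hjY, hjX⟩)) (not_lt.1 hnlt)⟩
      · rintro ⟨hjY, hjX, heq⟩
        exact ⟨⟨hjY, hjX⟩, by rw [heq]; exact lt_irrefl _⟩
    rw [he1, he2] at hsplit
    omega
  · have hsplit : ((Y ∩ Xxᶜ).filter (fun i => c i < b2)).card
        + ((Y ∩ Xxᶜ).filter (fun i => ¬ c i < b2)).card = (Y ∩ Xxᶜ).card :=
      Finset.card_filter_add_card_filter_not _
    have he1 : (Y ∩ Xxᶜ).filter (fun i => c i < b2) = Xxᶜ.filter (fun i => c i < b2) := by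
      apply Finset.Subset.antisymm
      · intro j hj
        rw [Finset.mem_filter, Finset.mem_inter] at hj
        exact Finset.mem_filter.2 ⟨hj.1.2, hj.2⟩
      · intro j hj
        have := fact_d hj
        rw [Finset.mem_filter] at hj
        exact Finset.mem_filter.2 ⟨Finset.mem_inter.2 ⟨this, hj.1⟩, hj.2⟩
    have he2 : (Y ∩ Xxᶜ).filter (fun i => ¬ c i < b2)
        = Y ∩ Xxᶜ.filter (fun i => c i = b2) := by
      ext j
      rw [Finset.mem_filter, Finset.mem_inter, Finset.mem_inter, Finset.mem_filter]
      constructor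
      · rintro ⟨⟨hjY, hjX⟩, hnlt⟩
        exact ⟨hjY, hjX, le_antisymm (fact_e j (Finset.mem_inter.2 ⟨hjY, hjX⟩)) (not_lt.1 hnlt)⟩
      · rintro ⟨hjY, hjX, heq⟩
        exact ⟨⟨hjY, hjX⟩, by rw [heq]; exact lt_irrefl _⟩
    rw [he1, he2] at hsplit
    omega

end structure_sec

lemma sum_dir {n : ℕ} {R S : Finset (Fin n)} (hdisj : Disjoint R S) (T : Finset (Fin n)) (a b : ℝ) :
    (∑ i ∈ T, (if i ∈ R then a else if i ∈ S then b else 0))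
      = ((T ∩ R).card : ℝ) * a + ((T ∩ S).card : ℝ) * b := by
  classical
  set f : Fin n → ℝ := fun i => if i ∈ R then a else if i ∈ S then b else 0 with hf
  have hsplit : ∑ i ∈ T ∩ R, f i + ∑ i ∈ T \ R, f i = ∑ i ∈ T, f i :=
    Finset.sum_inter_add_sum_sdiff T R f
  have h1 : ∑ i ∈ T ∩ R, f i = ((T ∩ R).card : ℝ) * a := by
    rw [Finset.sum_congr rfl (fun i hi => ?_), Finset.sum_const, nsmul_eq_mul]
    rw [hf]
    simp only [if_pos (Finset.mem_inter.1 hi).2]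
  have h2 : ∑ i ∈ T \ R, f i = ((T ∩ S).card : ℝ) * b := by
    have he : ∀ i ∈ T \ R, f i = if i ∈ S then b else 0 := by
      intro i hi
      rw [hf]
      simp only [if_neg (Finset.mem_sdiff.1 hi).2]
    rw [Finset.sum_congr rfl he, Finset.sum_ite_mem]
    have : (T \ R) ∩ S = T ∩ S := by
      ext i
      simp only [Finset.mem_inter, Finset.mem_sdiff]
      constructor
      · rintro ⟨⟨h1, -⟩, h2⟩; exact ⟨h1, h2⟩
      · rintro ⟨h1, h2⟩
        exact ⟨⟨h1, fun hR => (Finset.disjoint_left.1 hdisj) hR h2⟩, h2⟩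
    rw [this, Finset.sum_const, nsmul_eq_mul]
  linarith [hsplit]


set_option maxHeartbeats 1000000 in
/-- The perturbation/exchange contradiction, in an isolated context. -/
lemma perturb_contra {n : ℕ} (Γ : ℝ) (cl d δ cstar : Fin n → ℝ)
    (Xx R S : Finset (Fin n)) (T : Finset (Finset (Fin n))) (hTne : T.Nonempty)
    (r' s' : ℕ)
    (hδ01 : ∀ i, 0 ≤ δ i ∧ δ i ≤ d i) (hδsum : (∑ i, δ i) ≤ Γ)
    (hcs : cstar = fun i => cl i + δ i)
    (hRS : Disjoint R S) (hRXx : R ⊆ Xx) (hSXx : Disjoint S Xx)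
    (hRne : R.Nonempty) (hSne : S.Nonempty)
    (hint : ∀ i ∈ R ∪ S, 0 < δ i ∧ δ i < d i)
    (hrn : R.card ≤ n) (hsn : S.card ≤ n)
    (hr'1 : 1 ≤ r') (hs'1 : 1 ≤ s')
    (hstruct : ∀ Y ∈ T, (∑ i ∈ Y, cstar i) = T.inf' hTne (fun Y => ∑ i ∈ Y, cstar i) →
      (Y ∩ R).card = r' ∧ (Y ∩ S).card = s')
    (hmax : ∀ c' ∈ Uc n cl d Γ, T.inf' hTne (fun Y => ∑ i ∈ Y, c' i)
      ≤ T.inf' hTne (fun Y => ∑ i ∈ Y, cstar i))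
    (hΨmax : ∀ c' ∈ Uc n cl d Γ,
      T.inf' hTne (fun Y => ∑ i ∈ Y, c' i) = T.inf' hTne (fun Y => ∑ i ∈ Y, cstar i) →
      (∑ i ∈ Xx, c' i) ≤ ∑ i ∈ Xx, cstar i) : False := by
  classical
  have hcspt : ∀ i, cstar i = cl i + δ i := fun i => congrFun hcs i
  set vstar : ℝ := T.inf' hTne (fun Y => ∑ i ∈ Y, cstar i) with hvstar
  set r : ℕ := R.card with hr
  set s : ℕ := S.card with hs
  have hr1 : 1 ≤ r := Finset.card_pos.2 hRne
  have hs1 : 1 ≤ s := Finset.card_pos.2 hSne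
  -- direction
  set v : Fin n → ℝ := fun i => if i ∈ R then -(s:ℝ) else if i ∈ S then (r:ℝ) else 0 with hv
  have hvsum : ∀ W : Finset (Fin n),
      (∑ i ∈ W, v i) = -((W ∩ R).card : ℝ) * s + ((W ∩ S).card : ℝ) * r := by
    intro W
    rw [hv, sum_dir hRS W (-(s:ℝ)) (r:ℝ)]
    ring
  have hvzero : (∑ i, v i) = 0 := by
    rw [hvsum Finset.univ, Finset.univ_inter, Finset.univ_inter, ← hr, ← hs]
    ring
  -- epsilon
  have hm1 : ∃ m1 : ℝ, 0 < m1 ∧ ∀ i ∈ R ∪ S, m1 ≤ min (δ i) (d i - δ i) := by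
    have hne : (R ∪ S).Nonempty := hRne.mono Finset.subset_union_left
    refine ⟨(R ∪ S).inf' hne (fun i => min (δ i) (d i - δ i)), ?_, ?_⟩
    · rw [Finset.lt_inf'_iff]
      intro i hi
      have := hint i hi
      simp only [lt_min_iff]
      exact ⟨this.1, by linarith [this.2]⟩
    · intro i hi
      exact Finset.inf'_le _ hi
  obtain ⟨m1, hm1pos, hm1le⟩ := hm1
  set NM : Finset (Finset (Fin n)) :=
    T.filter (fun Y => (∑ i ∈ Y, cstar i) ≠ vstar) with hNM
  have hNMlb : ∃ μ : ℝ, 0 < μ ∧ ∀ Y ∈ NM, vstar + μ ≤ ∑ i ∈ Y, cstar i := by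
    by_cases hNMne : NM.Nonempty
    · refine ⟨NM.inf' hNMne (fun Y => (∑ i ∈ Y, cstar i) - vstar), ?_, ?_⟩
      · rw [Finset.lt_inf'_iff]
        intro Y hY
        rw [hNM, Finset.mem_filter] at hY
        have hle : vstar ≤ ∑ i ∈ Y, cstar i := Finset.inf'_le _ hY.1
        rcases lt_or_eq_of_le hle with h | h
        · linarith
        · exact absurd h.symm hY.2
      · intro Y hY
        have := Finset.inf'_le (fun Y => (∑ i ∈ Y, cstar i) - vstar) hY
        linarith
    · exact ⟨1, one_pos, fun Y hY => absurd ⟨Y, hY⟩ hNMne⟩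
  obtain ⟨μ, hμpos, hμle⟩ := hNMlb
  set B : ℝ := ∑ i, |v i| with hB
  have hB0 : 0 ≤ B := Finset.sum_nonneg (fun i _ => abs_nonneg _)
  set ε : ℝ := min (m1 / (n + 1)) (μ / (B + 1)) with hε
  have hεpos : 0 < ε := by
    apply lt_min
    · positivity
    · positivity
  have hεB : ε * B < μ := by
    have h1 : ε ≤ μ / (B + 1) := min_le_right _ _
    have h2 : ε * B ≤ (μ / (B + 1)) * B := mul_le_mul_of_nonneg_right h1 hB0
    have hBpos : (0:ℝ) < B + 1 := by linarith
    have h3 : (μ / (B + 1)) * B < (μ / (B + 1)) * (B + 1) :=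
      mul_lt_mul_of_pos_left (by linarith) (div_pos hμpos hBpos)
    have h4 : (μ / (B + 1)) * (B + 1) = μ := div_mul_cancel₀ μ (ne_of_gt hBpos)
    linarith
  have hεn : ∀ t : ℕ, t ≤ n → ε * t ≤ m1 := by
    intro t ht
    have h1 : ε ≤ m1 / (n + 1) := min_le_left _ _
    have hnpos : (0:ℝ) < (n:ℝ) + 1 := by positivity
    have ht' : (t : ℝ) ≤ (n:ℝ) + 1 := by
      have : (t : ℝ) ≤ (n : ℝ) := by exact_mod_cast ht
      linarith
    have h2 : ε * t ≤ (m1 / (n + 1)) * ((n:ℝ) + 1) :=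
      mul_le_mul h1 ht' (by positivity) (le_of_lt (div_pos hm1pos hnpos))
    have h3 : (m1 / ((n:ℝ) + 1)) * ((n:ℝ) + 1) = m1 := div_mul_cancel₀ m1 (ne_of_gt hnpos)
    linarith
  -- the perturbed scenario
  have hperturb : ∀ σ : ℝ, |σ| = 1 → (fun i => cstar i + σ * ε * v i) ∈ Uc n cl d Γ := by
    intro σ hσ
    refine ⟨fun i => δ i + σ * ε * v i, ?_, ?_, ?_⟩
    · intro i
      show 0 ≤ δ i + σ * ε * v i ∧ δ i + σ * ε * v i ≤ d i
      by_cases hiRS : i ∈ R ∪ S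
      · have hbound : |σ * ε * v i| ≤ m1 := by
          rw [abs_mul, abs_mul, hσ, one_mul, abs_of_pos hεpos]
          rcases Finset.mem_union.1 hiRS with hiR | hiS
          · have hvi : v i = -(s:ℝ) := by rw [hv]; simp [hiR]
            rw [hvi, abs_neg, Nat.abs_cast]
            exact hεn s hsn
          · have hiRn : i ∉ R := Finset.disjoint_right.1 hRS hiS
            have hvi : v i = (r:ℝ) := by rw [hv]; simp [hiRn, hiS]
            rw [hvi, Nat.abs_cast]
            exact hεn r hrn
        have hm := hm1le i hiRS
        rw [le_min_iff] at hm
        rw [abs_le] at hbound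
        constructor
        · linarith [hm.1, hbound.1]
        · linarith [hm.2, hbound.2, (hδ01 i).2]
      · have hvi : v i = 0 := by
          rw [hv]
          simp only [Finset.mem_union] at hiRS
          push_neg at hiRS
          simp [hiRS.1, hiRS.2]
        rw [hvi, mul_zero]
        simpa using hδ01 i
    · show (∑ i, (δ i + σ * ε * v i)) ≤ Γ
      have hsplit2 : (∑ i, (δ i + σ * ε * v i)) = (∑ i, δ i) + σ * ε * (∑ i, v i) := by
        rw [Finset.sum_add_distrib, Finset.mul_sum]
      rw [hsplit2, hvzero, mul_zero, add_zero]
      exact hδsum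
    · funext i
      rw [hcspt i]
      ring
  -- value of perturbed scenario on Y
  have hYval : ∀ (σ : ℝ) (Y : Finset (Fin n)),
      (∑ i ∈ Y, (cstar i + σ * ε * v i)) = (∑ i ∈ Y, cstar i) + σ * ε * (∑ i ∈ Y, v i) := by
    intro σ Y
    rw [Finset.sum_add_distrib, Finset.mul_sum]
  have habsY : ∀ Y : Finset (Fin n), |∑ i ∈ Y, v i| ≤ B := by
    intro Y
    calc |∑ i ∈ Y, v i| ≤ ∑ i ∈ Y, |v i| := Finset.abs_sum_le_sum_abs _ _
    _ ≤ ∑ i, |v i| := Finset.sum_le_sum_of_subset_of_nonneg (Finset.subset_univ _)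
        (fun i _ _ => abs_nonneg _)
    _ = B := rfl
  -- u
  set u : ℝ := -(s:ℝ) * r' + (r:ℝ) * s' with hu
  have huY : ∀ Y ∈ T, (∑ i ∈ Y, cstar i) = vstar → (∑ i ∈ Y, v i) = u := by
    intro Y hY hYmin
    obtain ⟨h1, h2⟩ := hstruct Y hY hYmin
    rw [hvsum Y, h1, h2, hu]
    ring
  have hkey : ∀ σ : ℝ, |σ| = 1 → 0 ≤ σ * u →
      vstar ≤ T.inf' hTne (fun Y => ∑ i ∈ Y, (cstar i + σ * ε * v i)) := by
    intro σ hσ hσu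
    apply Finset.le_inf'
    intro Y hY
    rw [hYval σ Y]
    by_cases hYmin : (∑ i ∈ Y, cstar i) = vstar
    · rw [huY Y hY hYmin, hYmin]
      have h0 : 0 ≤ σ * ε * u := by
        rw [mul_comm σ ε, mul_assoc]
        exact mul_nonneg (le_of_lt hεpos) hσu
      linarith
    · have hYNM : Y ∈ NM := Finset.mem_filter.2 ⟨hY, hYmin⟩
      have h1 := hμle Y hYNM
      have h2 : |σ * ε * (∑ i ∈ Y, v i)| ≤ ε * B := by
        rw [abs_mul, abs_mul, hσ, one_mul, abs_of_pos hεpos]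
        exact mul_le_mul_of_nonneg_left (habsY Y) (le_of_lt hεpos)
      rw [abs_le] at h2
      linarith [h2.1]
  -- strict version for σu > 0
  have hkeystrict : ∀ σ : ℝ, |σ| = 1 → 0 < σ * u →
      vstar < T.inf' hTne (fun Y => ∑ i ∈ Y, (cstar i + σ * ε * v i)) := by
    intro σ hσ hσu
    obtain ⟨Y0, hY0, hval⟩ :=
      Finset.exists_mem_eq_inf' hTne (fun Y => ∑ i ∈ Y, (cstar i + σ * ε * v i))
    rw [hval, hYval]
    by_cases hYmin : (∑ i ∈ Y0, cstar i) = vstar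
    · rw [huY Y0 hY0 hYmin, hYmin]
      have h0 : 0 < σ * ε * u := by
        rw [mul_comm σ ε, mul_assoc]
        exact mul_pos hεpos hσu
      linarith
    · have hYNM : Y0 ∈ NM := Finset.mem_filter.2 ⟨hY0, hYmin⟩
      have h1 := hμle Y0 hYNM
      have h2 : |σ * ε * (∑ i ∈ Y0, v i)| ≤ ε * B := by
        rw [abs_mul, abs_mul, hσ, one_mul, abs_of_pos hεpos]
        exact mul_le_mul_of_nonneg_left (habsY Y0) (le_of_lt hεpos)
      rw [abs_le] at h2
      linarith [h2.1]
  rcases lt_trichotomy u 0 with huneg | huzero | hupos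
  · have hgt := hkeystrict (-1) (by simp) (by nlinarith)
    have hle := hmax _ (hperturb (-1) (by simp))
    linarith
  · -- u = 0 : σ = -1 keeps value, increases Ψ
    have hmem := hperturb (-1) (by simp)
    have hge := hkey (-1) (by simp) (by rw [huzero]; simp)
    have hle := hmax _ hmem
    have heq : T.inf' hTne (fun Y => ∑ i ∈ Y, (cstar i + (-1) * ε * v i)) = vstar :=
      le_antisymm hle hge
    have hΨle := hΨmax _ hmem heq
    have hΨval : (∑ i ∈ Xx, (cstar i + (-1) * ε * v i)) = (∑ i ∈ Xx, cstar i) + ε * (s * r) := by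
      rw [hYval (-1) Xx]
      have hXxR : Xx ∩ R = R := Finset.inter_eq_right.2 hRXx
      have hXxS : Xx ∩ S = ∅ := by
        rw [← Finset.disjoint_iff_inter_eq_empty]
        exact hSXx.symm
      rw [hvsum Xx, hXxR, hXxS]
      simp only [Finset.card_empty, Nat.cast_zero, zero_mul, add_zero]
      ring
    rw [hΨval] at hΨle
    have hpos : 0 < ε * (s * r) := by
      have h1 : (0:ℝ) < s := by exact_mod_cast hs1
      have h2 : (0:ℝ) < r := by exact_mod_cast hr1
      positivity
    linarith
  · have hgt := hkeystrict 1 (by simp) (by nlinarith)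
    have hle := hmax _ (hperturb 1 (by simp))
    linarith

set_option maxHeartbeats 1000000 in
/-- There is a worst-case scenario in `U^c` with the structure of Proposition 2. -/
theorem stmt2 (n p k : ℕ) (hk1 : 1 ≤ k) (hkp : k < p) (hpn : p ≤ n) (hknp : k ≤ n - p)
    (x : Fin n → ℝ) (hx : x ∈ selPhi n p)
    (cl d : Fin n → ℝ) (hcl : ∀ i, 0 ≤ cl i) (hd : ∀ i, 0 ≤ d i)
    (Γ : ℝ) (hΓ : 0 ≤ Γ) :
    let Xx : Finset (Fin n) := Finset.univ.filter (fun i => x i = 1)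
    let b : (Fin n → ℝ) → ℝ := fun c => kthSmallest n Finset.univ c p
    let b1 : (Fin n → ℝ) → ℝ := fun c => kthSmallest n Xx c (p - k)
    let b2 : (Fin n → ℝ) → ℝ := fun c => kthSmallest n Xxᶜ c k
    let D : Set ℝ := Set.range cl ∪ Set.range (fun i => cl i + d i)
    ∃ cstar ∈ Uc n cl d Γ,
      (∀ c ∈ Uc n cl d Γ,
        incVal n (selPhiK n p k x) c ≤ incVal n (selPhiK n p k x) cstar) ∧
      (b1 cstar ≤ b cstar ∨ b1 cstar ∈ D ∨ b2 cstar ∈ D) := by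
  classical
  intro Xx b b1 b2 D
  have hXxcard : Xx.card = p := xx_card hx
  have hXxCcard : Xxᶜ.card = n - p := by
    rw [Finset.card_compl, hXxcard, Fintype.card_fin]
  have hTne : (goodY n p k Xx).Nonempty := goodY_nonempty hx
  set G : (Fin n → ℝ) → ℝ :=
    fun c => (goodY n p k Xx).inf' hTne (fun Y => ∑ i ∈ Y, c i) with hG
  have hGexp : ∀ c, G c = (goodY n p k Xx).inf' hTne (fun Y => ∑ i ∈ Y, c i) :=
    fun _ => rfl
  have hGinc : ∀ c, incVal n (selPhiK n p k x) c = G c := fun c => incVal_eq hx (le_of_lt hkp) c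
  have hGcont : Continuous G :=
    cont_inf' _ hTne _ (fun Y => continuous_finset_sum Y (fun i _ => continuous_apply i))
  have hUcomp := Uc_compact n cl d Γ
  have hUne := Uc_nonempty n cl d Γ hd hΓ
  obtain ⟨c1, hc1U, hc1max⟩ := hUcomp.exists_isMaxOn hUne hGcont.continuousOn
  rw [isMaxOn_iff] at hc1max
  set M : Set (Fin n → ℝ) := Uc n cl d Γ ∩ {cc | G cc = G c1} with hM
  have hMcomp : IsCompact M := hUcomp.inter_right (isClosed_eq hGcont continuous_const)
  have hMne : M.Nonempty := ⟨c1, hc1U, rfl⟩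
  have hΨcont : Continuous (fun cc : Fin n → ℝ => ∑ i ∈ Xx, cc i) :=
    continuous_finset_sum Xx (fun i _ => continuous_apply i)
  obtain ⟨cstar, hcstarM, hcstarmax⟩ := hMcomp.exists_isMaxOn hMne hΨcont.continuousOn
  rw [isMaxOn_iff] at hcstarmax
  have hcstarU : cstar ∈ Uc n cl d Γ := hcstarM.1
  have hGstar : G cstar = G c1 := hcstarM.2
  refine ⟨cstar, hcstarU, ?_, ?_⟩
  · intro c hc
    rw [hGinc, hGinc, hGstar]
    exact hc1max c hc
  · by_contra hcon
    push_neg at hcon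
    obtain ⟨hble, hb1D, hb2D⟩ := hcon
    obtain ⟨δ, hδ01, hδsum, hceq⟩ := hcstarU
    have hcs : ∀ i, cstar i = cl i + δ i := fun i => congrFun hceq i
    set R : Finset (Fin n) := Xx.filter (fun i => cstar i = b1 cstar) with hR
    set S : Finset (Fin n) := Xxᶜ.filter (fun i => cstar i = b2 cstar) with hS
    have hRS : Disjoint R S := Finset.disjoint_filter_filter disjoint_compl_right
    have hRXx : R ⊆ Xx := Finset.filter_subset _ _
    have hSXxC : S ⊆ Xxᶜ := Finset.filter_subset _ _
    have hSXx : Disjoint S Xx := by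
      apply Finset.disjoint_left.2
      intro a ha haXx
      exact (Finset.mem_compl.1 (hSXxC ha)) haXx
    have hRne : R.Nonempty := by
      obtain ⟨i, hi, hci⟩ := kth_attained Xx cstar (p - k) (by omega) (by omega)
      exact ⟨i, Finset.mem_filter.2 ⟨hi, hci.symm ▸ rfl⟩⟩
    have hSne : S.Nonempty := by
      obtain ⟨i, hi, hci⟩ := kth_attained Xxᶜ cstar k (by omega) (by omega)
      exact ⟨i, Finset.mem_filter.2 ⟨hi, hci.symm ▸ rfl⟩⟩
    have hint : ∀ i ∈ R ∪ S, 0 < δ i ∧ δ i < d i := by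
      intro i hi
      have hnot0 : δ i ≠ 0 ∧ δ i ≠ d i := by
        rcases Finset.mem_union.1 hi with hiR | hiS
        · have hval : cstar i = b1 cstar := (Finset.mem_filter.1 hiR).2
          constructor
          · intro h0
            exact hb1D (Or.inl ⟨i, by rw [← hval, hcs i, h0, add_zero]⟩)
          · intro hd'
            exact hb1D (Or.inr ⟨i, by rw [← hval, hcs i, hd']⟩)
        · have hval : cstar i = b2 cstar := (Finset.mem_filter.1 hiS).2
          constructor
          · intro h0
            exact hb2D (Or.inl ⟨i, by rw [← hval, hcs i, h0, add_zero]⟩)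
          · intro hd'
            exact hb2D (Or.inr ⟨i, by rw [← hval, hcs i, hd']⟩)
      exact ⟨lt_of_le_of_ne (hδ01 i).1 (Ne.symm hnot0.1), lt_of_le_of_ne (hδ01 i).2 hnot0.2⟩
    have hrn : R.card ≤ n := le_trans (Finset.card_le_card hRXx) (by omega)
    have hsn : S.card ≤ n := le_trans (Finset.card_le_card hSXxC) (by omega)
    set alt : ℕ := (Xx.filter (fun i => cstar i < b1 cstar)).card with halt
    set blt : ℕ := (Xxᶜ.filter (fun i => cstar i < b2 cstar)).card with hblt
    have haltle : alt ≤ p - k - 1 := by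
      have h := kth_card_lt Xx cstar (p - k) (by omega) (by omega)
      rw [halt]
      exact le_trans h (by omega)
    have hbltle : blt ≤ k - 1 := kth_card_lt Xxᶜ cstar k (by omega) (by omega)
    set r' : ℕ := p - k - alt with hr'
    set s' : ℕ := k - blt with hs'
    have hr'1 : 1 ≤ r' := by omega
    have hs'1 : 1 ≤ s' := by omega
    have hstruct : ∀ Y ∈ goodY n p k Xx,
        (∑ i ∈ Y, cstar i) = (goodY n p k Xx).inf' hTne (fun Y => ∑ i ∈ Y, cstar i) →
        (Y ∩ R).card = r' ∧ (Y ∩ S).card = s' := by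
      intro Y hY hYmin
      have hmin : ∀ Z ∈ goodY n p k Xx, ∑ i ∈ Y, cstar i ≤ ∑ i ∈ Z, cstar i := by
        intro Z hZ
        rw [hYmin]
        exact Finset.inf'_le _ hZ
      obtain ⟨h1, h2, -⟩ := minimizer_structure hk1 hkp hpn hknp hXxcard hble hY hmin
      have hb1e : kthSmallest n Xx cstar (p - k) = b1 cstar := rfl
      have hb2e : kthSmallest n Xxᶜ cstar k = b2 cstar := rfl
      rw [hb1e, ← hR, ← halt] at h1
      rw [hb2e, ← hS, ← hblt] at h2
      constructor
      · omega
      · omega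
    apply perturb_contra Γ cl d δ cstar Xx R S (goodY n p k Xx) hTne r' s'
      hδ01 hδsum hceq hRS hRXx hSXx hRne hSne hint hrn hsn hr'1 hs'1 hstruct
    · -- hmax
      intro c' hc'
      rw [← hGexp, ← hGexp, hGstar]
      exact hc1max c' hc'
    · -- hΨmax
      intro c' hc' heq
      apply hcstarmax
      refine ⟨hc', ?_⟩
      show G c' = G c1
      rw [hGexp c', heq, ← hGexp, hGstar]
end
end

section
/- Let n be a positive integer, a ∈ ℝ^n, d ∈ ℝ^n with d_i ≥ 0 for all i, and Γ ≥ 0. Then min { Σ_{i=1}^n [a_i − δ_i]_+ : 0 ≤ δ_i ≤ d_i for all i, Σ_{i=1}^n δ_i ≤ Γ } = max { Σ_{i=1}^n [a_i]_+ − Γ, Σ_{i=1}^n [a_i − d_i]_+ }. -/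
open Finset

lemma key1 (x y : ℝ) (hy : 0 ≤ y) : max x 0 - max (x - y) 0 = min y (max x 0) := by
  rcases le_total x 0 with h|h <;> rcases le_total x y with h2|h2 <;>
    simp [max_def, min_def] <;> split_ifs <;> linarith

lemma key2 (x y : ℝ) (hy : 0 ≤ y) : max (x - min y (max x 0)) 0 = max (x - y) 0 := by
  rcases le_total x 0 with h|h <;> rcases le_total x y with h2|h2 <;>
    simp [max_def, min_def] <;> split_ifs <;> linarith

lemma key3 (x t : ℝ) (ht : 0 ≤ t) (ht2 : t ≤ max x 0) : max (x - t) 0 = max x 0 - t := by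
  rcases le_total x 0 with h|h
  · have hx : max x 0 = 0 := max_eq_right h
    have : t = 0 := le_antisymm (hx ▸ ht2) ht
    simp [this, max_eq_right h]
  · have hx : max x 0 = x := max_eq_left h
    rw [hx] at ht2 ⊢
    exact max_eq_left (by linarith)

/-- The optimal value of the budgeted reduction subproblem:
`min { Σ [a_i − δ_i]_+ : 0 ≤ δ ≤ d, Σ δ ≤ Γ } = max { Σ [a_i]_+ − Γ, Σ [a_i − d_i]_+ }`. -/
theorem stmt4 (n : ℕ) (hn : 1 ≤ n) (a d : Fin n → ℝ) (hd : ∀ i, 0 ≤ d i)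
    (Γ : ℝ) (hΓ : 0 ≤ Γ) :
    IsLeast {v | ∃ δ : Fin n → ℝ, (∀ i, 0 ≤ δ i ∧ δ i ≤ d i) ∧ (∑ i, δ i) ≤ Γ ∧
        v = ∑ i, max (a i - δ i) 0}
      (max ((∑ i, max (a i) 0) - Γ) (∑ i, max (a i - d i) 0)) := by
  set A := ∑ i, max (a i) 0 with hA
  set B := ∑ i, max (a i - d i) 0 with hB
  set S := ∑ i, min (d i) (max (a i) 0) with hSdef
  have hAB : A - B = S := by
    rw [hA, hB, hSdef, ← Finset.sum_sub_distrib]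
    exact Finset.sum_congr rfl fun i _ => key1 _ _ (hd i)
  have hmnn : ∀ i, 0 ≤ min (d i) (max (a i) 0) :=
    fun i => le_min (hd i) (le_max_right _ _)
  constructor
  · by_cases hS : S ≤ Γ
    · refine ⟨fun i => min (d i) (max (a i) 0),
        fun i => ⟨hmnn i, min_le_left _ _⟩, hSdef ▸ hS, ?_⟩
      have h1 : ∑ i, max (a i - min (d i) (max (a i) 0)) 0 = B := by
        rw [hB]; exact Finset.sum_congr rfl fun i _ => key2 _ _ (hd i)
      rw [h1]
      exact max_eq_right (by linarith)
    · push_neg at hS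
      have hS0 : 0 < S := lt_of_le_of_lt hΓ hS
      have hfrac : 0 ≤ Γ / S := div_nonneg hΓ hS0.le
      have hfrac1 : Γ / S ≤ 1 := by rw [div_le_one hS0]; exact hS.le
      have hle : ∀ i, (Γ / S) * min (d i) (max (a i) 0) ≤ min (d i) (max (a i) 0) := by
        intro i
        calc (Γ / S) * min (d i) (max (a i) 0)
            ≤ 1 * min (d i) (max (a i) 0) :=
              mul_le_mul_of_nonneg_right hfrac1 (hmnn i)
          _ = _ := one_mul _
      refine ⟨fun i => (Γ / S) * min (d i) (max (a i) 0),
        fun i => ⟨mul_nonneg hfrac (hmnn i), (hle i).trans (min_le_left _ _)⟩, ?_, ?_⟩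
      · rw [← Finset.mul_sum, ← hSdef, div_mul_cancel₀ _ hS0.ne']
      · have heach : ∀ i ∈ Finset.univ, max (a i - (Γ / S) * min (d i) (max (a i) 0)) 0
            = max (a i) 0 - (Γ / S) * min (d i) (max (a i) 0) := by
          intro i _
          exact key3 _ _ (mul_nonneg hfrac (hmnn i)) ((hle i).trans (min_le_right _ _))
        rw [Finset.sum_congr rfl heach, Finset.sum_sub_distrib, ← Finset.mul_sum,
          ← hSdef, div_mul_cancel₀ _ hS0.ne', ← hA]
        exact max_eq_left (by linarith)
  · rintro v ⟨δ, hδ, hsum, rfl⟩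
    apply max_le
    · have h1 : ∀ i ∈ Finset.univ, max (a i) 0 - δ i ≤ max (a i - δ i) 0 := by
        intro i _
        rcases le_total (a i) 0 with h|h
        · rw [max_eq_right h]; linarith [(hδ i).1, le_max_right (a i - δ i) 0]
        · rw [max_eq_left h]; linarith [le_max_left (a i - δ i) 0]
      calc A - Γ ≤ A - ∑ i, δ i := by linarith
        _ = ∑ i, (max (a i) 0 - δ i) := by rw [hA, Finset.sum_sub_distrib]
        _ ≤ _ := Finset.sum_le_sum h1
    · exact Finset.sum_le_sum fun i _ =>
        max_le_max (by linarith [(hδ i).2]) le_rfl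
end

section
/- Let n, p, k be integers with 1 ≤ p ≤ n and 0 ≤ k ≤ p, let x ∈ Φ, and let c̲, d ∈ ℝ^n_{≥0} and Γ ≥ 0. Then max_{c ∈ U^c} min_{y ∈ Φ^k_x} Σ_{i=1}^n c_i·y_i = sup_{α ∈ ℝ, β ≥ 0} { p·α + (p−k)·β − max { Σ_{i=1}^n [α + β·x_i − c̲_i]_+ − Γ, Σ_{i=1}^n [α + β·x_i − c̲_i − d_i]_+ } }. -/
open Finset

noncomputable section

namespace Stmt5Aux

lemma exchange {n m : ℕ} {c : Fin n → ℝ} {U A : Finset (Fin n)}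
    (hA : A ∈ U.powersetCard m)
    (hmin : ∀ A' ∈ U.powersetCard m, ∑ i ∈ A, c i ≤ ∑ i ∈ A', c i)
    {j i : Fin n} (hj : j ∈ A) (hi : i ∈ U) (hiA : i ∉ A) : c j ≤ c i := by
  rw [Finset.mem_powersetCard] at hA
  obtain ⟨hAU, hAc⟩ := hA
  have hiA' : i ∉ A.erase j := fun h => hiA (Finset.mem_of_mem_erase h)
  have hmem : insert i (A.erase j) ∈ U.powersetCard m := by
    rw [Finset.mem_powersetCard]
    constructor
    · intro z hz
      rcases Finset.mem_insert.1 hz with h | h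
      · exact h ▸ hi
      · exact hAU (Finset.mem_of_mem_erase h)
    · rw [Finset.card_insert_of_notMem hiA', Finset.card_erase_of_mem hj]
      have : 1 ≤ A.card := Finset.card_pos.2 ⟨j, hj⟩
      omega
  have := hmin _ hmem
  rw [Finset.sum_insert hiA', Finset.sum_erase_eq_sub hj] at this
  linarith

lemma card_support {n p : ℕ} {x : Fin n → ℝ} (hx01 : ∀ i, x i = 0 ∨ x i = 1)
    (hxs : (∑ i, x i) = (p : ℝ)) :
    (Finset.univ.filter (fun i => x i = 1)).card = p := by
  set S := Finset.univ.filter (fun i => x i = 1) with hS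
  have h1 : ∑ i, x i = ∑ i ∈ S, x i :=
    (Finset.sum_subset (Finset.subset_univ S) (fun i _ hi => by
      rcases hx01 i with h | h
      · exact h
      · exact absurd (Finset.mem_filter.2 ⟨Finset.mem_univ i, h⟩) hi)).symm
  have h2 : ∑ i ∈ S, x i = (S.card : ℝ) := by
    rw [Finset.sum_congr rfl (fun i hi => (Finset.mem_filter.1 hi).2)]
    simp [hS]
  have : (S.card : ℝ) = (p : ℝ) := by rw [← h2, ← h1, hxs]
  exact_mod_cast this

/-- Weak LP duality for the inner minimization. -/
lemma weak {n p k : ℕ} (x y c : Fin n → ℝ) (hy : y ∈ selPhiK n p k x)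
    (α β : ℝ) (hβ : 0 ≤ β) :
    (p : ℝ) * α + ((p : ℝ) - (k : ℝ)) * β ≤
      (∑ i, c i * y i) + ∑ i, max (α + β * x i - c i) 0 := by
  obtain ⟨hy01, hysum, hxy⟩ := hy
  have key : ∀ i, (α + β * x i) * y i ≤ c i * y i + max (α + β * x i - c i) 0 := by
    intro i
    rcases hy01 i with h | h
    · rw [h, mul_zero, mul_zero, zero_add]
      exact le_max_right _ _
    · rw [h, mul_one, mul_one]
      have := le_max_left (α + β * x i - c i) 0
      linarith
  have h1 : ∑ i, (α + β * x i) * y i = α * (∑ i, y i) + β * ∑ i, x i * y i := by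
    rw [Finset.sum_congr rfl (fun i _ => show (α + β * x i) * y i
      = α * y i + β * (x i * y i) from by ring), Finset.sum_add_distrib,
      ← Finset.mul_sum, ← Finset.mul_sum]
  have h2 : (p : ℝ) * α + ((p : ℝ) - (k : ℝ)) * β ≤ ∑ i, (α + β * x i) * y i := by
    rw [h1, hysum]
    have := mul_le_mul_of_nonneg_left hxy hβ
    nlinarith
  have h3 : ∑ i, (α + β * x i) * y i ≤ ∑ i, (c i * y i + max (α + β * x i - c i) 0) :=
    Finset.sum_le_sum (fun i _ => key i)
  rw [Finset.sum_add_distrib] at h3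
  linarith

/-- Strong duality construction for the inner minimization. -/
lemma key {n p k : ℕ} (hpn : p ≤ n) (hk : k ≤ p)
    (x : Fin n → ℝ) (hx : x ∈ selPhi n p) (c : Fin n → ℝ) (hc : ∀ i, 0 ≤ c i) :
    ∃ α β : ℝ, 0 ≤ β ∧ ∃ y ∈ selPhiK n p k x,
      ∑ i, c i * y i ≤ (p : ℝ) * α + ((p : ℝ) - (k : ℝ)) * β
        - ∑ i, max (α + β * x i - c i) 0 := by
  classical
  obtain ⟨hx01, hxs⟩ := hx
  set S : Finset (Fin n) := Finset.univ.filter (fun i => x i = 1) with hSdef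
  have hScard : S.card = p := card_support hx01 hxs
  have hxS : ∀ i ∈ S, x i = 1 := fun i hi => (Finset.mem_filter.1 hi).2
  have hxT : ∀ i, i ∉ S → x i = 0 := by
    intro i hi
    rcases hx01 i with h | h
    · exact h
    · exact absurd (Finset.mem_filter.2 ⟨Finset.mem_univ i, h⟩) hi
  obtain ⟨A, hAmem, hAmin⟩ := Finset.exists_min_image (S.powersetCard (p - k))
    (fun A => ∑ i ∈ A, c i) (Finset.powersetCard_nonempty.2 (by omega))
  obtain ⟨hAsub, hAcard⟩ := Finset.mem_powersetCard.1 hAmem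
  have hRcard : ((Finset.univ : Finset (Fin n)) \ A).card = n - (p - k) := by
    rw [Finset.card_sdiff_of_subset (Finset.subset_univ A), Finset.card_univ, Fintype.card_fin, hAcard]
  obtain ⟨B, hBmem, hBmin⟩ := Finset.exists_min_image
    (((Finset.univ : Finset (Fin n)) \ A).powersetCard k)
    (fun B => ∑ i ∈ B, c i) (Finset.powersetCard_nonempty.2 (by omega))
  obtain ⟨hBsub, hBcard⟩ := Finset.mem_powersetCard.1 hBmem
  have hAB : ∀ i ∈ B, i ∉ A := fun i hi => (Finset.mem_sdiff.1 (hBsub hi)).2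
  set α : ℝ := if hB : B.Nonempty then B.sup' hB c else 0 with hαdef
  have hαB : ∀ i ∈ B, c i ≤ α := by
    intro i hi
    rw [hαdef, dif_pos ⟨i, hi⟩]
    exact Finset.le_sup' c hi
  have hout : ∀ i, i ∉ A → i ∉ B → α ≤ c i := by
    intro i hiA hiB
    by_cases hB : B.Nonempty
    · rw [hαdef, dif_pos hB]
      exact Finset.sup'_le hB c (fun j hj =>
        exchange hBmem hBmin hj (Finset.mem_sdiff.2 ⟨Finset.mem_univ i, hiA⟩) hiB)
    · rw [hαdef, dif_neg hB]
      exact hc i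
  set s : ℝ := if hA2 : A.Nonempty then max (A.sup' hA2 c) α else α with hsdef
  have hαs : α ≤ s := by
    rw [hsdef]
    split_ifs with h
    · exact le_max_right _ _
    · exact le_rfl
  have hsA : ∀ i ∈ A, c i ≤ s := by
    intro i hi
    rw [hsdef, dif_pos ⟨i, hi⟩]
    exact le_trans (Finset.le_sup' c hi) (le_max_left _ _)
  refine ⟨α, s - α, by linarith, ?_⟩
  set y : Fin n → ℝ := fun i => if i ∈ A ∪ B then 1 else 0 with hydef
  have hdisj : Disjoint A B := Finset.disjoint_left.2 (fun a ha hb => hAB a hb ha)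
  have hABcard : (A ∪ B).card = p := by
    rw [Finset.card_union_of_disjoint hdisj, hAcard, hBcard]; omega
  have hysum : ∑ i, y i = (p : ℝ) := by
    rw [hydef]
    simp only []
    rw [Finset.sum_ite_mem, Finset.univ_inter, Finset.sum_const, hABcard]
    simp
  have hxnn : ∀ i, 0 ≤ x i := fun i => by rcases hx01 i with h | h <;> rw [h] <;> norm_num
  have hxyA : (p : ℝ) - (k : ℝ) ≤ ∑ i, x i * y i := by
    have e1 : ∑ i, x i * y i = ∑ i ∈ A ∪ B, x i := by
      rw [hydef]
      simp only [mul_ite, mul_one, mul_zero]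
      rw [Finset.sum_ite_mem, Finset.univ_inter]
    have e2 : ∑ i ∈ A, x i ≤ ∑ i ∈ A ∪ B, x i :=
      Finset.sum_le_sum_of_subset_of_nonneg Finset.subset_union_left
        (fun i _ _ => hxnn i)
    have e3 : ∑ i ∈ A, x i = (A.card : ℝ) := by
      rw [Finset.sum_congr rfl (fun i hi => hxS i (hAsub hi))]
      simp
    have e4 : ((A.card : ℕ) : ℝ) = (p : ℝ) - (k : ℝ) := by
      rw [hAcard]
      push_cast [Nat.cast_sub hk]
      ring
    rw [e1]
    rw [e3, e4] at e2
    exact e2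
  have hy01 : ∀ i, y i = 0 ∨ y i = 1 := by
    intro i; rw [hydef]; by_cases h : i ∈ A ∪ B <;> simp [h]
  refine ⟨y, ⟨hy01, hysum, hxyA⟩, ?_⟩
  have hcy : ∑ i, c i * y i = ∑ i ∈ A, c i + ∑ i ∈ B, c i := by
    rw [hydef]
    simp only [mul_ite, mul_one, mul_zero]
    rw [Finset.sum_ite_mem, Finset.univ_inter, Finset.sum_union hdisj]
  have hsplit : ∑ i, max (α + (s - α) * x i - c i) 0
      = ∑ i ∈ S, max (s - c i) 0 + ∑ i ∈ Finset.univ \ S, max (α - c i) 0 := by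
    rw [← Finset.sum_sdiff (Finset.subset_univ S), add_comm]
    congr 1
    · exact Finset.sum_congr rfl (fun i hi => by rw [hxS i hi]; ring_nf)
    · exact Finset.sum_congr rfl (fun i hi => by
        rw [hxT i (Finset.mem_sdiff.1 hi).2]; ring_nf)
  have hsumS : ∑ i ∈ S \ A, max (s - c i) 0 + ∑ i ∈ A, max (s - c i) 0
      = ∑ i ∈ S, max (s - c i) 0 := Finset.sum_sdiff hAsub
  have hsumB : ∑ i ∈ B ∩ S, c i + ∑ i ∈ B \ S, c i = ∑ i ∈ B, c i :=
    Finset.sum_inter_add_sum_sdiff B S c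
  have hsumT : ∑ i ∈ (Finset.univ \ S) ∩ B, max (α - c i) 0
      + ∑ i ∈ (Finset.univ \ S) \ B, max (α - c i) 0
      = ∑ i ∈ Finset.univ \ S, max (α - c i) 0 :=
    Finset.sum_inter_add_sum_sdiff _ B _
  have hTB : (Finset.univ \ S) ∩ B = B \ S := by
    ext i
    simp only [Finset.mem_inter, Finset.mem_sdiff, Finset.mem_univ, true_and]
    tauto
  have E1 : ∑ i ∈ A, c i + ∑ i ∈ A, max (s - c i) 0 = (A.card : ℝ) * s := by
    rw [← Finset.sum_add_distrib,
      Finset.sum_congr rfl (fun i hi => show c i + max (s - c i) 0 = s from by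
        rw [max_eq_left (by linarith [hsA i hi])]; ring)]
    rw [Finset.sum_const, nsmul_eq_mul]
  have E2 : ∑ i ∈ B \ S, c i + ∑ i ∈ B \ S, max (α - c i) 0 = ((B \ S).card : ℝ) * α := by
    rw [← Finset.sum_add_distrib,
      Finset.sum_congr rfl (fun i hi => show c i + max (α - c i) 0 = α from by
        rw [max_eq_left (by linarith [hαB i (Finset.mem_sdiff.1 hi).1])]; ring)]
    rw [Finset.sum_const, nsmul_eq_mul]
  have E3 : ∑ i ∈ (Finset.univ \ S) \ B, max (α - c i) 0 = 0 := by
    apply Finset.sum_eq_zero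
    intro i hi
    obtain ⟨hi1, hi2⟩ := Finset.mem_sdiff.1 hi
    have hiS := (Finset.mem_sdiff.1 hi1).2
    have hiA : i ∉ A := fun h => hiS (hAsub h)
    have := hout i hiA hi2
    exact max_eq_right (by linarith)
  have E4 : ∑ i ∈ S \ A, max (s - c i) 0 = ∑ i ∈ B ∩ S, max (α - c i) 0 := by
    by_cases hcase : s = α
    · have hBS : (S \ A) ∩ B = B ∩ S := by
        ext i
        simp only [Finset.mem_inter, Finset.mem_sdiff]
        constructor
        · rintro ⟨⟨h1, _⟩, h2⟩; exact ⟨h2, h1⟩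
        · rintro ⟨h1, h2⟩; exact ⟨⟨h2, hAB i h1⟩, h1⟩
      rw [← Finset.sum_inter_add_sum_sdiff (S \ A) B (fun i => max (s - c i) 0)]
      have hz : ∑ i ∈ (S \ A) \ B, max (s - c i) 0 = 0 := by
        apply Finset.sum_eq_zero
        intro i hi
        obtain ⟨hi1, hi2⟩ := Finset.mem_sdiff.1 hi
        have hiA := (Finset.mem_sdiff.1 hi1).2
        have := hout i hiA hi2
        exact max_eq_right (by rw [hcase]; linarith)
      rw [hz, add_zero, hBS, hcase]
    · have hslt : α < s := lt_of_le_of_ne hαs (fun h => hcase h.symm)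
      have hA2 : A.Nonempty := by
        by_contra h
        rw [hsdef, dif_neg h] at hcase
        exact hcase rfl
      have hseq : s = A.sup' hA2 c := by
        rw [hsdef, dif_pos hA2] at hslt ⊢
        rcases max_choice (A.sup' hA2 c) α with h | h
        · exact h
        · rw [h] at hslt; exact absurd rfl (ne_of_lt hslt)
      have hSA : ∀ i ∈ S, i ∉ A → s ≤ c i := by
        intro i hiS hiA
        rw [hseq]
        exact Finset.sup'_le hA2 c (fun j hj => exchange hAmem hAmin hj hiS hiA)
      have hz1 : ∑ i ∈ S \ A, max (s - c i) 0 = 0 := by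
        apply Finset.sum_eq_zero
        intro i hi
        obtain ⟨hi1, hi2⟩ := Finset.mem_sdiff.1 hi
        exact max_eq_right (by linarith [hSA i hi1 hi2])
      have hz2 : B ∩ S = ∅ := by
        rw [Finset.eq_empty_iff_forall_notMem]
        intro i hi
        obtain ⟨hiB, hiS⟩ := Finset.mem_inter.1 hi
        have h1 := hαB i hiB
        have h2 := hSA i hiS (hAB i hiB)
        linarith
      rw [hz1, hz2, Finset.sum_empty]
  have E5 : ∑ i ∈ B ∩ S, c i + ∑ i ∈ B ∩ S, max (α - c i) 0 = ((B ∩ S).card : ℝ) * α := by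
    rw [← Finset.sum_add_distrib,
      Finset.sum_congr rfl (fun i hi => show c i + max (α - c i) 0 = α from by
        rw [max_eq_left (by linarith [hαB i (Finset.mem_inter.1 hi).1])]; ring)]
    rw [Finset.sum_const, nsmul_eq_mul]
  have hcardB : ((B ∩ S).card : ℝ) + ((B \ S).card : ℝ) = (k : ℝ) := by
    have := Finset.card_inter_add_card_sdiff B S
    rw [hBcard] at this
    exact_mod_cast this
  have hcardA : ((A.card : ℕ) : ℝ) = (p : ℝ) - (k : ℝ) := by
    rw [hAcard]; push_cast [Nat.cast_sub hk]; ring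
  rw [hcy, hsplit]
  rw [← hsumS, ← hsumB, ← hTB, ← hsumT, E3, add_zero]
  have hmul1 : ((B ∩ S).card : ℝ) * α + ((B \ S).card : ℝ) * α = (k : ℝ) * α := by
    rw [← add_mul, hcardB]
  rw [hcardA] at E1
  rw [hTB]
  nlinarith [E1, E2, E4, E5, hmul1]

end Stmt5Aux

open Stmt5Aux in
/-- The adversarial problem AREC under `U^c` equals the optimum of problem (7). -/
theorem stmt5 (n p k : ℕ) (hp1 : 1 ≤ p) (hpn : p ≤ n) (hk : k ≤ p)
    (x : Fin n → ℝ) (hx : x ∈ selPhi n p)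
    (cl d : Fin n → ℝ) (hcl : ∀ i, 0 ≤ cl i) (hd : ∀ i, 0 ≤ d i)
    (Γ : ℝ) (hΓ : 0 ≤ Γ) :
    sSup {v | ∃ c ∈ Uc n cl d Γ, v = incVal n (selPhiK n p k x) c} =
      sSup {v | ∃ α β : ℝ, 0 ≤ β ∧
        v = (p : ℝ) * α + ((p : ℝ) - (k : ℝ)) * β -
          max ((∑ i, max (α + β * x i - cl i) 0) - Γ)
              (∑ i, max (α + β * x i - cl i - d i) 0)} := by
  classical
  obtain ⟨hx01, hxs⟩ := hx
  have hxPhiK : x ∈ selPhiK n p k x := by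
    refine ⟨hx01, hxs, ?_⟩
    have h : ∀ i, x i * x i = x i := fun i => by rcases hx01 i with h | h <;> rw [h] <;> ring
    rw [Finset.sum_congr rfl (fun i _ => h i), hxs]
    have : (0:ℝ) ≤ (k:ℝ) := Nat.cast_nonneg k
    linarith
  have hBdd : ∀ c : Fin n → ℝ, (∀ i, 0 ≤ c i) →
      BddBelow {v | ∃ y ∈ selPhiK n p k x, v = ∑ i, c i * y i} := by
    intro c hc
    refine ⟨0, ?_⟩
    rintro v ⟨y, hy, rfl⟩
    exact Finset.sum_nonneg (fun i _ => by
      rcases hy.1 i with h | h <;> rw [h] <;> simp [hc i])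
  set M : ℝ := ∑ i, (cl i + d i) with hMdef
  set L := {v | ∃ c ∈ Uc n cl d Γ, v = incVal n (selPhiK n p k x) c} with hLdef
  set Rs := {v | ∃ α β : ℝ, 0 ≤ β ∧
        v = (p : ℝ) * α + ((p : ℝ) - (k : ℝ)) * β -
          max ((∑ i, max (α + β * x i - cl i) 0) - Γ)
              (∑ i, max (α + β * x i - cl i - d i) 0)} with hRdef
  have hM_L : ∀ v ∈ L, v ≤ M := by
    rintro v ⟨c, ⟨δ, hδ, hδΓ, rfl⟩, rfl⟩
    have hc0 : ∀ i, 0 ≤ cl i + δ i := fun i => add_nonneg (hcl i) (hδ i).1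
    have h1 : incVal n (selPhiK n p k x) (fun i => cl i + δ i)
        ≤ ∑ i, (cl i + δ i) * x i :=
      csInf_le (hBdd _ hc0) ⟨x, hxPhiK, rfl⟩
    have h2 : ∑ i, (cl i + δ i) * x i ≤ M := by
      apply Finset.sum_le_sum
      intro i _
      rcases hx01 i with h | h
      · rw [h, mul_zero]; exact add_nonneg (hcl i) (hd i)
      · rw [h, mul_one]; linarith [(hδ i).2]
    exact le_trans h1 h2
  have hM_R : ∀ v ∈ Rs, v ≤ M := by
    rintro v ⟨α, β, hβ, rfl⟩
    set S : Finset (Fin n) := Finset.univ.filter (fun i => x i = 1) with hSdef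
    have hScard : S.card = p := card_support hx01 hxs
    have h1 : ∑ i ∈ S, (α + β - (cl i + d i)) ≤ ∑ i, max (α + β * x i - cl i - d i) 0 := by
      calc ∑ i ∈ S, (α + β - (cl i + d i))
          ≤ ∑ i ∈ S, max (α + β * x i - cl i - d i) 0 :=
            Finset.sum_le_sum (fun i hi => by
              rw [(Finset.mem_filter.1 hi).2, mul_one]
              exact le_trans (by linarith) (le_max_left _ _))
        _ ≤ ∑ i, max (α + β * x i - cl i - d i) 0 :=
            Finset.sum_le_sum_of_subset_of_nonneg (Finset.subset_univ S)
              (fun i _ _ => le_max_right _ _)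
    have h2 : ∑ i ∈ S, (α + β - (cl i + d i))
        = (S.card : ℝ) * (α + β) - ∑ i ∈ S, (cl i + d i) := by
      rw [Finset.sum_sub_distrib, Finset.sum_const, nsmul_eq_mul]
    have h3 : ∑ i ∈ S, (cl i + d i) ≤ M :=
      Finset.sum_le_sum_of_subset_of_nonneg (Finset.subset_univ S)
        (fun i _ _ => add_nonneg (hcl i) (hd i))
    have hcast : (S.card : ℝ) = (p : ℝ) := by rw [hScard]
    rw [hcast] at h2
    have hkβ : (0:ℝ) ≤ (k : ℝ) * β := mul_nonneg (Nat.cast_nonneg k) hβ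
    have hmax := le_max_right ((∑ i, max (α + β * x i - cl i) 0) - Γ)
      (∑ i, max (α + β * x i - cl i - d i) 0)
    nlinarith [h1, h2, h3, hkβ, hmax]
  have hL_ne : L.Nonempty := by
    refine ⟨incVal n (selPhiK n p k x) (fun i => cl i + (0:ℝ)), ⟨_, ⟨fun _ => 0,
      fun i => ⟨le_rfl, hd i⟩, by simpa using hΓ, rfl⟩, rfl⟩⟩
  have hR_ne : Rs.Nonempty := ⟨_, 0, 0, le_rfl, rfl⟩
  apply le_antisymm
  · apply csSup_le hL_ne
    rintro v ⟨c, ⟨δ, hδ, hδΓ, rfl⟩, rfl⟩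
    set c : Fin n → ℝ := fun i => cl i + δ i with hcdef
    have hc0 : ∀ i, 0 ≤ c i := fun i => add_nonneg (hcl i) (hδ i).1
    obtain ⟨α, β, hβ, y, hy, hineq⟩ := key hpn hk x ⟨hx01, hxs⟩ c hc0
    have h1 : incVal n (selPhiK n p k x) c ≤ ∑ i, c i * y i :=
      csInf_le (hBdd c hc0) ⟨y, hy, rfl⟩
    have hT1 : (∑ i, max (α + β * x i - cl i) 0) - Γ ≤ ∑ i, max (α + β * x i - c i) 0 := by
      have per : ∀ i, max (α + β * x i - cl i) 0 - δ i ≤ max (α + β * x i - c i) 0 := by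
        intro i
        have hδi := (hδ i).1
        have hci : c i = cl i + δ i := rfl
        rw [hci]
        have ha := le_max_left (α + β * x i - (cl i + δ i)) 0
        have hb := le_max_right (α + β * x i - (cl i + δ i)) 0
        apply sub_le_iff_le_add.2
        apply max_le
        · linarith
        · linarith
      calc (∑ i, max (α + β * x i - cl i) 0) - Γ
          ≤ (∑ i, max (α + β * x i - cl i) 0) - ∑ i, δ i := by linarith
        _ = ∑ i, (max (α + β * x i - cl i) 0 - δ i) := by rw [Finset.sum_sub_distrib]
        _ ≤ _ := Finset.sum_le_sum (fun i _ => per i)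
    have hT2 : ∑ i, max (α + β * x i - cl i - d i) 0 ≤ ∑ i, max (α + β * x i - c i) 0 :=
      Finset.sum_le_sum (fun i _ => max_le_max (by
        have hci : c i = cl i + δ i := rfl
        rw [hci]; linarith [(hδ i).2]) le_rfl)
    have hmem : ((p : ℝ) * α + ((p : ℝ) - (k : ℝ)) * β -
        max ((∑ i, max (α + β * x i - cl i) 0) - Γ)
            (∑ i, max (α + β * x i - cl i - d i) 0)) ∈ Rs := ⟨α, β, hβ, rfl⟩
    have hmax := max_le hT1 hT2
    have h2 : incVal n (selPhiK n p k x) c ≤ (p : ℝ) * α + ((p : ℝ) - (k : ℝ)) * β -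
        max ((∑ i, max (α + β * x i - cl i) 0) - Γ)
            (∑ i, max (α + β * x i - cl i - d i) 0) := by linarith
    exact le_trans h2 (le_csSup ⟨M, hM_R⟩ hmem)
  · apply csSup_le hR_ne
    rintro v ⟨α, β, hβ, rfl⟩
    set e : Fin n → ℝ := fun i => α + β * x i - cl i with hedef
    -- construct the worst-case deviation δ
    have hδex : ∃ δ : Fin n → ℝ, (∀ i, 0 ≤ δ i ∧ δ i ≤ d i) ∧ (∑ i, δ i) ≤ Γ ∧
        ∑ i, max (e i - δ i) 0 ≤
          max ((∑ i, max (e i) 0) - Γ) (∑ i, max (e i - d i) 0) := by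
      set m : Fin n → ℝ := fun i => min (d i) (max (e i) 0) with hmdef
      have hm0 : ∀ i, 0 ≤ m i := fun i => le_min (hd i) (le_max_right _ _)
      have hmd : ∀ i, m i ≤ d i := fun i => min_le_left _ _
      have hmz : ∀ i, e i ≤ 0 → m i = 0 := by
        intro i hi
        have : max (e i) 0 = 0 := max_eq_right hi
        rw [hmdef]
        simp only []
        rw [this]
        exact min_eq_right (hd i)
      have hme : ∀ i, 0 < e i → e i - m i = max (e i - d i) 0 := by
        intro i hi
        have hmax : max (e i) 0 = e i := max_eq_left (le_of_lt hi)
        rw [hmdef]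
        simp only []
        rw [hmax]
        rcases le_total (d i) (e i) with h | h
        · rw [min_eq_left h, max_eq_left (by linarith)]
        · rw [min_eq_right h, sub_self, max_eq_right (by linarith)]
      set D : ℝ := ∑ i, m i with hDdef
      have hD0 : 0 ≤ D := Finset.sum_nonneg (fun i _ => hm0 i)
      by_cases hD : D ≤ Γ
      · refine ⟨m, fun i => ⟨hm0 i, hmd i⟩, hD, ?_⟩
        have per : ∀ i, max (e i - m i) 0 ≤ max (e i - d i) 0 := by
          intro i
          rcases le_or_gt (e i) 0 with hi | hi
          · rw [hmz i hi, sub_zero, max_eq_right hi]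
            exact le_max_right _ _
          · rw [hme i hi, max_eq_left (le_max_right _ _)]
        exact le_trans (Finset.sum_le_sum (fun i _ => per i)) (le_max_right _ _)
      · push_neg at hD
        have hDpos : 0 < D := lt_of_le_of_lt hΓ hD
        set t : ℝ := Γ / D with htdef
        have ht0 : 0 ≤ t := div_nonneg hΓ (le_of_lt hDpos)
        have ht1 : t ≤ 1 := (div_le_one hDpos).2 (le_of_lt hD)
        refine ⟨fun i => t * m i, fun i => ⟨mul_nonneg ht0 (hm0 i),
          le_trans (mul_le_of_le_one_left (hm0 i) ht1) (hmd i)⟩, ?_, ?_⟩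
        · rw [← Finset.mul_sum, ← hDdef, htdef, div_mul_cancel₀ Γ (ne_of_gt hDpos)]
        · have per : ∀ i, max (e i - t * m i) 0 ≤ max (e i) 0 - t * m i := by
            intro i
            rcases le_or_gt (e i) 0 with hi | hi
            · rw [hmz i hi, mul_zero, sub_zero, sub_zero]
            · have hm_le : m i ≤ e i := by
                rw [hmdef]
                simp only []
                rw [max_eq_left (le_of_lt hi)]
                exact min_le_right _ _
              have h1 : t * m i ≤ e i :=
                le_trans (mul_le_of_le_one_left (hm0 i) ht1) hm_le
              rw [max_eq_left (by linarith), max_eq_left (le_of_lt hi)]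
          have hsum : ∑ i, max (e i - t * m i) 0 ≤ ∑ i, (max (e i) 0 - t * m i) :=
            Finset.sum_le_sum (fun i _ => per i)
          rw [Finset.sum_sub_distrib, ← Finset.mul_sum, ← hDdef, htdef,
            div_mul_cancel₀ Γ (ne_of_gt hDpos)] at hsum
          exact le_trans hsum (le_max_left _ _)
    obtain ⟨δ, hδ, hδΓ, hδval⟩ := hδex
    set c : Fin n → ℝ := fun i => cl i + δ i with hcdef
    have hcU : c ∈ Uc n cl d Γ := ⟨δ, hδ, hδΓ, rfl⟩
    have heδ : ∀ i, max (α + β * x i - c i) 0 = max (e i - δ i) 0 := by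
      intro i
      have : α + β * x i - c i = e i - δ i := by
        rw [hcdef, hedef]; ring
      rw [this]
    have hlow : (p : ℝ) * α + ((p : ℝ) - (k : ℝ)) * β - ∑ i, max (e i - δ i) 0
        ≤ incVal n (selPhiK n p k x) c := by
      show _ ≤ sInf {v | ∃ y ∈ selPhiK n p k x, v = ∑ i, c i * y i}
      have hne : {v | ∃ y ∈ selPhiK n p k x, v = ∑ i, c i * y i}.Nonempty :=
        ⟨∑ i, c i * x i, x, hxPhiK, rfl⟩
      apply le_csInf hne
      rintro b ⟨y, hy, rfl⟩
      have := weak x y c hy α β hβ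
      rw [Finset.sum_congr rfl (fun i _ => heδ i)] at this
      linarith
    have hvle : (p : ℝ) * α + ((p : ℝ) - (k : ℝ)) * β -
        max ((∑ i, max (α + β * x i - cl i) 0) - Γ)
            (∑ i, max (α + β * x i - cl i - d i) 0)
        ≤ incVal n (selPhiK n p k x) c := by
      have he1 : ∑ i, max (α + β * x i - cl i) 0 = ∑ i, max (e i) 0 := by
        apply Finset.sum_congr rfl
        intro i _
        rw [hedef]
      have he2 : ∑ i, max (α + β * x i - cl i - d i) 0 = ∑ i, max (e i - d i) 0 := by
        apply Finset.sum_congr rfl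
        intro i _
        rw [hedef]
      rw [he1, he2]
      linarith
    exact le_trans hvle (le_csSup ⟨M, hM_L⟩ ⟨c, hcU, rfl⟩)

end
end

section
/- Let n, p, k be integers with 1 ≤ p ≤ n and 0 ≤ k ≤ p, let c̲, d ∈ ℝ^n_{≥0} and Γ ≥ 0. Let r, s ∈ [n] be two items with c̲_r ≤ c̲_s and c̲_r + d_r ≤ c̲_s + d_s. Let x ∈ Φ with x_s = 1 and x_r = 0, and let x' ∈ Φ be obtained from x by setting x'_s = 0 and x'_r = 1 (all other entries unchanged). Then max_{c ∈ U^c} min_{y ∈ Φ^k_{x'}} Σ_i c_i·y_i ≤ max_{c ∈ U^c} min_{y ∈ Φ^k_x} Σ_i c_i·y_i (dominance rule). -/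
open Finset

noncomputable section

private lemma sum_two_diff {n : ℕ} {r s : Fin n} (hrs : r ≠ s) (f g : Fin n → ℝ)
    (h : ∀ i, i ≠ r → i ≠ s → f i = g i) :
    ∑ i, f i = ∑ i, g i + ((f r - g r) + (f s - g s)) := by
  have key : ∑ i, (f i - g i) = (f r - g r) + (f s - g s) := by
    have hp : ∑ i, (f i - g i) = ∑ i ∈ ({r, s} : Finset (Fin n)), (f i - g i) := by
      symm
      apply Finset.sum_subset (Finset.subset_univ _)
      intro i _ hi
      simp only [Finset.mem_insert, Finset.mem_singleton, not_or] at hi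
      rw [h i hi.1 hi.2]; ring
    rw [hp, Finset.sum_pair hrs]
  have h2 : ∑ i, (f i - g i) = ∑ i, f i - ∑ i, g i := Finset.sum_sub_distrib f g
  linarith

private lemma mem_selPhiK_self {n p k : ℕ} {z : Fin n → ℝ}
    (hz : z ∈ selPhi n p) : z ∈ selPhiK n p k z := by
  obtain ⟨h01, hsum⟩ := hz
  refine ⟨h01, hsum, ?_⟩
  have he : ∑ i, z i * z i = ∑ i, z i :=
    Finset.sum_congr rfl (fun i _ => by rcases h01 i with h | h <;> simp [h])
  rw [he, hsum]
  have hk0 : (0:ℝ) ≤ (k:ℝ) := Nat.cast_nonneg k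
  linarith

/-- Dominance rule: exchanging a selected item `s` for a dominating item `r`
does not increase the adversarial value. -/
theorem stmt7 (n p k : ℕ) (hp1 : 1 ≤ p) (hpn : p ≤ n) (hk : k ≤ p)
    (cl d : Fin n → ℝ) (hcl : ∀ i, 0 ≤ cl i) (hd : ∀ i, 0 ≤ d i)
    (Γ : ℝ) (hΓ : 0 ≤ Γ)
    (r s : Fin n) (h1 : cl r ≤ cl s) (h2 : cl r + d r ≤ cl s + d s)
    (x : Fin n → ℝ) (hx : x ∈ selPhi n p) (hxs : x s = 1) (hxr : x r = 0)
    (x' : Fin n → ℝ) (hx' : x' = Function.update (Function.update x s 0) r 1) :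
    sSup {v | ∃ c ∈ Uc n cl d Γ, v = incVal n (selPhiK n p k x') c} ≤
      sSup {v | ∃ c ∈ Uc n cl d Γ, v = incVal n (selPhiK n p k x) c} := by
  obtain ⟨hx01, hxsum⟩ := hx
  have hrs : r ≠ s := by
    intro h; rw [h, hxs] at hxr; norm_num at hxr
  have hsr : s ≠ r := hrs.symm
  have hx'r : x' r = 1 := by rw [hx']; simp
  have hx's : x' s = 0 := by
    rw [hx', Function.update_of_ne hsr, Function.update_self]
  have hx'o : ∀ i, i ≠ r → i ≠ s → x' i = x i := by
    intro i hir his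
    rw [hx', Function.update_of_ne hir, Function.update_of_ne his]
  -- basic facts
  have hxK : x ∈ selPhiK n p k x := mem_selPhiK_self ⟨hx01, hxsum⟩
  have hx'01 : ∀ i, x' i = 0 ∨ x' i = 1 := by
    intro i
    by_cases hir : i = r
    · subst hir; right; exact hx'r
    by_cases his : i = s
    · subst his; left; exact hx's
    · rw [hx'o i hir his]; exact hx01 i
  -- lower bound zero for value sets
  have lowerb : ∀ (c : Fin n → ℝ), (∀ i, 0 ≤ c i) → ∀ (z : Fin n → ℝ),
      ∀ v ∈ {v | ∃ y ∈ selPhiK n p k z, v = ∑ i, c i * y i}, (0:ℝ) ≤ v := by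
    rintro c hc z v ⟨y, ⟨hy01, _, _⟩, rfl⟩
    apply Finset.sum_nonneg
    intro i _
    exact mul_nonneg (hc i) (by rcases hy01 i with h | h <;> simp [h])
  set B := ∑ i, (cl i + d i) with hBdef
  -- upper bound for the right-hand side set
  have hub : ∀ v ∈ {v | ∃ c ∈ Uc n cl d Γ, v = incVal n (selPhiK n p k x) c}, v ≤ B := by
    rintro v ⟨c, ⟨δ, hδ, hδΓ, hceq⟩, rfl⟩
    have hcpos : ∀ i, 0 ≤ c i := by
      intro i; rw [hceq]; have := (hδ i).1; have := hcl i; simp; linarith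
    have hmem : (∑ i, c i * x i) ∈ {v | ∃ y ∈ selPhiK n p k x, v = ∑ i, c i * y i} :=
      ⟨x, hxK, rfl⟩
    have hle : (∑ i, c i * x i) ≤ B := by
      apply Finset.sum_le_sum
      intro i _
      have hci : c i ≤ cl i + d i := by rw [hceq]; simp; linarith [(hδ i).2]
      rcases hx01 i with h | h
      · rw [h]; simp; linarith [hcl i, hd i]
      · rw [h]; simpa using hci
    exact le_trans (csInf_le ⟨0, fun w hw => lowerb c hcpos x w hw⟩ hmem) hle
  have hbddA : BddAbove {v | ∃ c ∈ Uc n cl d Γ, v = incVal n (selPhiK n p k x) c} :=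
    ⟨B, fun v hv => hub v hv⟩
  -- nonnegativity of the right-hand side sup
  have hclU : cl ∈ Uc n cl d Γ := by
    refine ⟨fun _ => 0, fun i => ⟨le_refl _, hd i⟩, by simpa using hΓ, ?_⟩
    funext i; simp
  have hRHS0 : 0 ≤ sSup {v | ∃ c ∈ Uc n cl d Γ, v = incVal n (selPhiK n p k x) c} := by
    have h0 : 0 ≤ incVal n (selPhiK n p k x) cl :=
      Real.sInf_nonneg (lowerb cl hcl x)
    exact le_trans h0 (le_csSup hbddA ⟨cl, hclU, rfl⟩)
  refine Real.sSup_le ?_ hRHS0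
  rintro v ⟨c, ⟨δ, hδ, hδΓ, hceq⟩, rfl⟩
  have hc_i : ∀ i, c i = cl i + δ i := fun i => by rw [hceq]
  have hcpos : ∀ i, 0 ≤ c i := by
    intro i; rw [hc_i i]; linarith [(hδ i).1, hcl i]
  have hδr := hδ r
  have hδs := hδ s
  -- the modified scenario
  set cs' : ℝ := min (cl s + d s) (max (cl s + δ s) (cl r + δ r)) with hcs'def
  set cr' : ℝ := (cl r + δ r) + (cl s + δ s) - cs' with hcr'def
  set c' : Fin n → ℝ :=
    Function.update (Function.update (fun i => cl i + δ i) r cr') s cs' with hc'def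
  have hc'r : c' r = cr' := by
    rw [hc'def, Function.update_of_ne hrs, Function.update_self]
  have hc's : c' s = cs' := by rw [hc'def, Function.update_self]
  have hc'o : ∀ i, i ≠ r → i ≠ s → c' i = cl i + δ i := by
    intro i hir his
    rw [hc'def, Function.update_of_ne his, Function.update_of_ne hir]
  -- bounds on cs', cr'
  have hcs'_lb : cl s + δ s ≤ cs' := le_min (by linarith [hδs.2]) (le_max_left _ _)
  have hcs'_ub : cs' ≤ cl s + d s := min_le_left _ _
  have hcs'_ge_cr : cl r + δ r ≤ cs' :=
    le_min (by linarith [hδr.2]) (le_max_right _ _)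
  have hmaxle : cs' ≤ max (cl s + δ s) (cl r + δ r) := min_le_right _ _
  have hcr'_lb : min (cl r + δ r) (cl s + δ s) ≤ cr' := by
    rw [hcr'def]
    rcases max_cases (cl s + δ s) (cl r + δ r) with ⟨he, _⟩ | ⟨he, _⟩ <;>
      rcases min_cases (cl r + δ r) (cl s + δ s) with ⟨he2, h3⟩ | ⟨he2, h3⟩ <;>
        rw [he2] <;> rw [he] at hmaxle <;> linarith
  have hcr'_lb2 : cl r ≤ cr' := by
    refine le_trans ?_ hcr'_lb
    exact le_min (by linarith [hδr.1]) (by linarith [hδs.1])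
  have hcr'_ub : cr' ≤ cl r + d r := by rw [hcr'def]; linarith [hδr.2, hcs'_lb]
  -- c' belongs to the uncertainty set
  have hc'U : c' ∈ Uc n cl d Γ := by
    refine ⟨fun i => c' i - cl i, ?_, ?_, ?_⟩
    · intro i
      show 0 ≤ c' i - cl i ∧ c' i - cl i ≤ d i
      by_cases hir : i = r
      · rw [hir, hc'r]; constructor <;> linarith
      by_cases his : i = s
      · rw [his, hc's]; constructor <;> linarith [hcl s]
      · rw [hc'o i hir his]
        constructor
        · linarith [(hδ i).1]
        · linarith [(hδ i).2]
    · show ∑ i, (c' i - cl i) ≤ Γ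
      have hsum : ∑ i, (c' i - cl i) = ∑ i, δ i := by
        have hst := sum_two_diff hrs (fun i => c' i - cl i) δ
          (fun i hir his => by rw [hc'o i hir his]; ring)
        rw [hst, hc'r, hc's, hcr'def]; ring
      rw [hsum]; exact hδΓ
    · funext i
      show c' i = cl i + (c' i - cl i)
      ring
  have hc'pos : ∀ i, 0 ≤ c' i := by
    intro i
    by_cases hir : i = r
    · rw [hir, hc'r]; linarith [hcl r]
    by_cases his : i = s
    · rw [his, hc's]; linarith [hcl s, hδs.1]
    · rw [hc'o i hir his]; linarith [hcl i, (hδ i).1]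
  -- the key inequality
  have hkey : incVal n (selPhiK n p k x') c ≤ incVal n (selPhiK n p k x) c' := by
    unfold incVal
    refine le_csInf ⟨∑ i, c' i * x i, x, hxK, rfl⟩ ?_
    rintro w ⟨y, ⟨hy01, hysum, hyov⟩, rfl⟩
    have hbddB : BddBelow {v | ∃ y ∈ selPhiK n p k x', v = ∑ i, c i * y i} :=
      ⟨0, fun w hw => lowerb c hcpos x' w hw⟩
    -- the swapped recovery vector
    set sw : Fin n → ℝ := Function.update (Function.update y r (y s)) s (y r)
      with hswdef
    have hswr : sw r = y s := by
      rw [hswdef, Function.update_of_ne hrs, Function.update_self]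
    have hsws : sw s = y r := by rw [hswdef, Function.update_self]
    have hswo : ∀ i, i ≠ r → i ≠ s → sw i = y i := by
      intro i hir his
      rw [hswdef, Function.update_of_ne his, Function.update_of_ne hir]
    have hsw01 : ∀ i, sw i = 0 ∨ sw i = 1 := by
      intro i
      by_cases hir : i = r
      · subst hir; rw [hswr]; exact hy01 s
      by_cases his : i = s
      · subst his; rw [hsws]; exact hy01 r
      · rw [hswo i hir his]; exact hy01 i
    have hswsum : ∑ i, sw i = (p : ℝ) := by
      have hst := sum_two_diff hrs sw y hswo
      rw [hst, hswr, hsws, hysum]; ring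
    have hswov : ∑ i, x' i * sw i = ∑ i, x i * y i := by
      have hst := sum_two_diff hrs (fun i => x' i * sw i) (fun i => x i * y i)
        (fun i hir his => by rw [hx'o i hir his, hswo i hir his])
      rw [hst, hx'r, hx's, hxr, hxs, hswr, hsws]; ring
    have hswK : sw ∈ selPhiK n p k x' := ⟨hsw01, hswsum, by rw [hswov]; exact hyov⟩
    have hyov' : ∑ i, x' i * y i = ∑ i, x i * y i + (y r - y s) := by
      have hst := sum_two_diff hrs (fun i => x' i * y i) (fun i => x i * y i)
        (fun i hir his => by rw [hx'o i hir his])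
      rw [hst, hx'r, hx's, hxr, hxs]; ring
    have hcost_y : ∑ i, c' i * y i
        = ∑ i, c i * y i + ((cr' - c r) * y r + (cs' - c s) * y s) := by
      have hst := sum_two_diff hrs (fun i => c' i * y i) (fun i => c i * y i)
        (fun i hir his => by rw [hc'o i hir his, hc_i i])
      rw [hst, hc'r, hc's]; ring
    have hcost_sw : ∑ i, c i * sw i
        = ∑ i, c i * y i + (c r * (y s - y r) + c s * (y r - y s)) := by
      have hst := sum_two_diff hrs (fun i => c i * sw i) (fun i => c i * y i)
        (fun i hir his => by rw [hswo i hir his])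
      rw [hst, hswr, hsws]; ring
    rcases hy01 r with hyr | hyr <;> rcases hy01 s with hys | hys
    · -- y r = 0, y s = 0 : use y itself
      have hyK : y ∈ selPhiK n p k x' := by
        refine ⟨hy01, hysum, ?_⟩
        rw [hyov', hyr, hys]; linarith
      refine le_trans (csInf_le hbddB ⟨y, hyK, rfl⟩) ?_
      rw [hcost_y, hyr, hys]; linarith
    · -- y r = 0, y s = 1 : use sw
      refine le_trans (csInf_le hbddB ⟨sw, hswK, rfl⟩) ?_
      rw [hcost_sw, hcost_y, hyr, hys]
      have : c r ≤ cs' := by rw [hc_i r]; exact hcs'_ge_cr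
      linarith
    · -- y r = 1, y s = 0
      rcases le_total (c r) (c s) with hcc | hcc
      · -- use y itself
        have hyK : y ∈ selPhiK n p k x' := by
          refine ⟨hy01, hysum, ?_⟩
          rw [hyov', hyr, hys]; linarith
        refine le_trans (csInf_le hbddB ⟨y, hyK, rfl⟩) ?_
        rw [hcost_y, hyr, hys]
        have hminr : min (cl r + δ r) (cl s + δ s) = cl r + δ r := by
          apply min_eq_left; rw [hc_i r, hc_i s] at hcc; linarith
        rw [hminr] at hcr'_lb
        have : c r ≤ cr' := by rw [hc_i r]; exact hcr'_lb
        linarith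
      · -- use sw
        refine le_trans (csInf_le hbddB ⟨sw, hswK, rfl⟩) ?_
        rw [hcost_sw, hcost_y, hyr, hys]
        have hminr : min (cl r + δ r) (cl s + δ s) = cl s + δ s := by
          apply min_eq_right; rw [hc_i r, hc_i s] at hcc; linarith
        rw [hminr] at hcr'_lb
        have : c s ≤ cr' := by rw [hc_i s]; exact hcr'_lb
        linarith
    · -- y r = 1, y s = 1 : use y itself
      have hyK : y ∈ selPhiK n p k x' := by
        refine ⟨hy01, hysum, ?_⟩
        rw [hyov', hyr, hys]; linarith
      refine le_trans (csInf_le hbddB ⟨y, hyK, rfl⟩) ?_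
      rw [hcost_y, hyr, hys]
      have hsumeq : cr' + cs' = (cl r + δ r) + (cl s + δ s) := by rw [hcr'def]; ring
      rw [hc_i r, hc_i s]
      linarith
  exact le_trans hkey (le_csSup hbddA ⟨c', hc'U, rfl⟩)
end
end
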